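/- arXiv:1707.06213 — 10 statements merged into one kernel-verified Lean document; each statement's English description precedes it below -/
import Mathlib

section
/- Let d ≥ 1, p ≥ 1, a, b > 0, and let η : [0,∞) → [0,∞) be nonincreasing with η(t) ≥ a for all t ∈ [0,b]. Let Ω ⊆ ℝ^d be a Borel set and μ a probability measure on Ω whose density ρ with respect to Lebesgue measure satisfies ρ(w) ≥ ρ_min > 0 for a.e. w ∈ Ω. Let n ≥ 1, x : Fin n → ℝ^d, ε > 0, and let T : Ω → ℝ^d be Borel measurable with pushforward μ ∘ T⁻¹ equal to the empirical measure μ_n and with ‖T(w) − w‖ ≤ bε/4 for μ-a.e. w. If k ∈ Fin n is such that the closed ball B̄(x k, bε/4) is contained in Ω, then for every f : Fin n → ℝ one has (osc_{bε/2}(f)(k))^p ≤ (2^{p+1}·4^d / (a·ρ_min·ω_d·b^d)) · ε^p · n · E_n(f), where ω_d denotes the Lebesgue measure of the unit ball of ℝ^d. -/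
open MeasureTheory Metric Set
open scoped ENNReal BigOperators

/-- The graph `p`-Dirichlet energy
`E_n(f) = (1/(ε^{p+d} n²)) Σ_{i,j} η(‖x i − x j‖/ε) |f i − f j|^p`. -/
noncomputable def graphEnergy (d n : ℕ) (x : Fin n → EuclideanSpace ℝ (Fin d))
    (ε : ℝ) (η : ℝ → ℝ) (p : ℝ) (f : Fin n → ℝ) : ℝ :=
  (1 / (ε ^ (p + (d : ℝ)) * (n : ℝ) ^ 2)) *
    ∑ i, ∑ j, η (‖x i - x j‖ / ε) * |f i - f j| ^ p

/-- The oscillation of `f` at the vertex `k` over radius `r`: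
`osc_r(f)(k) = max{f j : ‖x j − x k‖ ≤ r} − min{f j : ‖x j − x k‖ ≤ r}`. -/
noncomputable def oscAt (d n : ℕ) (x : Fin n → EuclideanSpace ℝ (Fin d))
    (f : Fin n → ℝ) (r : ℝ) (k : Fin n) : ℝ :=
  sSup (f '' {j | ‖x j - x k‖ ≤ r}) - sInf (f '' {j | ‖x j - x k‖ ≤ r})

/-- The empirical measure `μ_n = (1/n) Σ_i δ_{x i}`. -/
noncomputable def empiricalMeasure (d n : ℕ) (x : Fin n → EuclideanSpace ℝ (Fin d)) :
    Measure (EuclideanSpace ℝ (Fin d)) :=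
  ((n : ℝ≥0∞))⁻¹ • ∑ i, Measure.dirac (x i)

theorem stmt0 (d n : ℕ) (hd : 1 ≤ d) (hn : 1 ≤ n)
    (p a b ρmin ε : ℝ) (hp : 1 ≤ p) (ha : 0 < a) (hb : 0 < b) (hρmin : 0 < ρmin)
    (hε : 0 < ε)
    (η : ℝ → ℝ) (hηnonneg : ∀ t, 0 ≤ t → 0 ≤ η t)
    (hηmono : AntitoneOn η (Set.Ici 0))
    (hηa : ∀ t ∈ Set.Icc (0 : ℝ) b, a ≤ η t)
    (Ω : Set (EuclideanSpace ℝ (Fin d))) (hΩ : MeasurableSet Ω)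
    (ρ : EuclideanSpace ℝ (Fin d) → ℝ)
    (μ : Measure (EuclideanSpace ℝ (Fin d)))
    (hμ : μ = (volume.restrict Ω).withDensity (fun w => ENNReal.ofReal (ρ w)))
    (hprob : IsProbabilityMeasure μ)
    (hρ : ∀ᵐ w ∂(volume.restrict Ω), ρmin ≤ ρ w)
    (x : Fin n → EuclideanSpace ℝ (Fin d))
    (T : EuclideanSpace ℝ (Fin d) → EuclideanSpace ℝ (Fin d)) (hT : Measurable T)
    (hpush : μ.map T = empiricalMeasure d n x)
    (hclose : ∀ᵐ w ∂μ, ‖T w - w‖ ≤ b * ε / 4)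
    (k : Fin n) (hk : closedBall (x k) (b * ε / 4) ⊆ Ω)
    (f : Fin n → ℝ) :
    oscAt d n x f (b * ε / 2) k ^ p ≤
      (2 ^ (p + 1) * 4 ^ d /
          (a * ρmin * (volume (closedBall (0 : EuclideanSpace ℝ (Fin d)) 1)).toReal * b ^ d)) *
        ε ^ p * n * graphEnergy d n x ε η p f := by
  classical
  have hεd : ε ^ (p + (d:ℝ)) = ε ^ p * ε ^ d := by
    rw [Real.rpow_add hε, Real.rpow_natCast]
  have hn0 : (0:ℝ) < n := by exact_mod_cast hn
  set r1 : ℝ := b * ε / 4 with hr1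
  set r2 : ℝ := b * ε / 2 with hr2
  have hr1pos : 0 < r1 := by positivity
  have hr2pos : 0 < r2 := by positivity
  set S : Set (Fin n) := {j | ‖x j - x k‖ ≤ r2} with hS
  set F : Finset (Fin n) := Finset.univ.filter (fun j => ‖x j - x k‖ ≤ r2) with hF
  have hkS : k ∈ S := by simp [hS, sub_self, hr2pos.le]
  have hkF : k ∈ F := by simp [hF]; simpa [sub_self] using hr2pos.le
  have hne : (f '' S).Nonempty := ⟨f k, k, hkS, rfl⟩
  have hfin : (f '' S).Finite := (Set.toFinite S).image f
  obtain ⟨i0, hi0S, hfi0⟩ := hne.csSup_mem hfin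
  obtain ⟨j0, hj0S, hfj0⟩ := hne.csInf_mem hfin
  set O : ℝ := f i0 - f j0 with hO
  have hOsc : oscAt d n x f r2 k = O := by
    rw [oscAt, ← hS, ← hfi0, ← hfj0]
  have hOnonneg : 0 ≤ O := by
    have h1 : f j0 ≤ f k := hfj0 ▸ csInf_le hfin.bddBelow ⟨k, hkS, rfl⟩
    have h2 : f k ≤ f i0 := hfi0 ▸ le_csSup hfin.bddAbove ⟨k, hkS, rfl⟩
    simp only [hO]; linarith
  have hO2 : 0 ≤ O / 2 := by linarith
  have hp0 : (0:ℝ) ≤ p := by linarith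
  set A : ℝ := ∑ i, ∑ j, η (‖x i - x j‖ / ε) * |f i - f j| ^ p with hA
  have hterm : ∀ i j : Fin n, 0 ≤ η (‖x i - x j‖ / ε) * |f i - f j| ^ p := fun i j =>
    mul_nonneg (hηnonneg _ (div_nonneg (norm_nonneg _) hε.le))
      (Real.rpow_nonneg (abs_nonneg _) p)
  have hA0 : 0 ≤ A := Finset.sum_nonneg fun i _ => Finset.sum_nonneg fun j _ => hterm i j
  have hdivb : ∀ i j : Fin n, i ∈ S → j ∈ S → ‖x i - x j‖ / ε ∈ Set.Icc (0:ℝ) b := by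
    intro i j hi hj
    constructor
    · exact div_nonneg (norm_nonneg _) hε.le
    · rw [div_le_iff₀ hε]
      have h1 : ‖x i - x j‖ ≤ ‖x i - x k‖ + ‖x k - x j‖ := norm_sub_le_norm_sub_add_norm_sub _ _ _
      have h2 : ‖x k - x j‖ = ‖x j - x k‖ := norm_sub_rev _ _
      have hi' : ‖x i - x k‖ ≤ r2 := hi
      have hj' : ‖x j - x k‖ ≤ r2 := hj
      rw [hr2] at hi' hj'; rw [h2] at h1; linarith
  have hmemSF : ∀ j : Fin n, j ∈ F → j ∈ S := by intro j hj; simpa [hF, hS] using hj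
  have claim1 : ∑ j ∈ F, a * |f i0 - f j| ^ p ≤ A := by
    calc ∑ j ∈ F, a * |f i0 - f j| ^ p
        ≤ ∑ j ∈ F, η (‖x i0 - x j‖ / ε) * |f i0 - f j| ^ p := by
          refine Finset.sum_le_sum fun j hj => ?_
          exact mul_le_mul_of_nonneg_right (hηa _ (hdivb i0 j hi0S (hmemSF j hj)))
            (Real.rpow_nonneg (abs_nonneg _) p)
      _ ≤ ∑ j, η (‖x i0 - x j‖ / ε) * |f i0 - f j| ^ p :=
          Finset.sum_le_sum_of_subset_of_nonneg (Finset.subset_univ F)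
            (fun j _ _ => hterm i0 j)
      _ ≤ A := Finset.single_le_sum
            (f := fun i => ∑ j, η (‖x i - x j‖ / ε) * |f i - f j| ^ p)
            (fun i _ => Finset.sum_nonneg fun j _ => hterm i j) (Finset.mem_univ i0)
  have claim2 : ∑ j ∈ F, a * |f j - f j0| ^ p ≤ A := by
    calc ∑ j ∈ F, a * |f j - f j0| ^ p
        ≤ ∑ j ∈ F, η (‖x j - x j0‖ / ε) * |f j - f j0| ^ p := by
          refine Finset.sum_le_sum fun j hj => ?_
          exact mul_le_mul_of_nonneg_right (hηa _ (hdivb j j0 (hmemSF j hj) hj0S))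
            (Real.rpow_nonneg (abs_nonneg _) p)
      _ ≤ ∑ j, η (‖x j - x j0‖ / ε) * |f j - f j0| ^ p :=
          Finset.sum_le_sum_of_subset_of_nonneg (Finset.subset_univ F)
            (fun j _ _ => hterm j j0)
      _ ≤ A := Finset.sum_le_sum fun i _ =>
            Finset.single_le_sum
              (f := fun j => η (‖x i - x j‖ / ε) * |f i - f j| ^ p)
              (fun j _ => hterm i j) (Finset.mem_univ j0)
  have key : ∀ j ∈ F, a * (O/2) ^ p ≤ a * |f i0 - f j| ^ p + a * |f j - f j0| ^ p := by
    intro j _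
    have htri : O ≤ |f i0 - f j| + |f j - f j0| := by
      have h1 : O = (f i0 - f j) + (f j - f j0) := by ring
      rw [h1]; exact add_le_add (le_abs_self _) (le_abs_self _)
    rcases le_or_gt (O/2) |f i0 - f j| with h | h
    · calc a * (O/2) ^ p ≤ a * |f i0 - f j| ^ p :=
            mul_le_mul_of_nonneg_left (Real.rpow_le_rpow hO2 h hp0) ha.le
        _ ≤ _ := le_add_of_nonneg_right
            (mul_nonneg ha.le (Real.rpow_nonneg (abs_nonneg _) p))
    · have h2 : O/2 ≤ |f j - f j0| := by
        have := abs_nonneg (f i0 - f j); linarith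
      calc a * (O/2) ^ p ≤ a * |f j - f j0| ^ p :=
            mul_le_mul_of_nonneg_left (Real.rpow_le_rpow hO2 h2 hp0) ha.le
        _ ≤ _ := le_add_of_nonneg_left
            (mul_nonneg ha.le (Real.rpow_nonneg (abs_nonneg _) p))
  have hsumkey : (F.card : ℝ) * (a * (O/2) ^ p) ≤ 2 * A := by
    have h1 : ∑ _j ∈ F, a * (O/2) ^ p
        ≤ ∑ j ∈ F, (a * |f i0 - f j| ^ p + a * |f j - f j0| ^ p) := Finset.sum_le_sum key
    rw [Finset.sum_const, nsmul_eq_mul, Finset.sum_add_distrib] at h1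
    linarith
  -- measure-theoretic lower bound on F.card
  set B1 : Set (EuclideanSpace ℝ (Fin d)) := closedBall (x k) r1 with hB1
  set B2 : Set (EuclideanSpace ℝ (Fin d)) := closedBall (x k) r2 with hB2
  have hB1m : MeasurableSet B1 := measurableSet_closedBall
  have hμB1_le : μ B1 ≤ μ (T ⁻¹' B2) := by
    refine measure_mono_ae ?_
    filter_upwards [hclose] with w hw hwB
    have hw1 : dist w (x k) ≤ r1 := hwB
    have hTw : dist (T w) w ≤ r1 := by rw [dist_eq_norm]; exact hw
    have htri := dist_triangle (T w) w (x k)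
    have : dist (T w) (x k) ≤ r2 := by rw [hr2]; rw [hr1] at hTw hw1; linarith
    exact this
  have hdens : ENNReal.ofReal ρmin * volume B1 ≤ μ B1 := by
    rw [hμ, withDensity_apply _ hB1m, Measure.restrict_restrict_of_subset hk]
    have hae : ∀ᵐ w ∂(volume.restrict B1), ρmin ≤ ρ w :=
      hρ.filter_mono (ae_mono (Measure.restrict_mono hk le_rfl))
    calc ENNReal.ofReal ρmin * volume B1 = ∫⁻ _ in B1, ENNReal.ofReal ρmin ∂volume := by
          rw [setLIntegral_const]
      _ ≤ ∫⁻ w in B1, ENNReal.ofReal (ρ w) ∂volume :=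
          lintegral_mono_ae (hae.mono fun w hw => ENNReal.ofReal_le_ofReal hw)
  have hvolB1 : volume B1 = ENNReal.ofReal (r1 ^ d) *
      volume (closedBall (0 : EuclideanSpace ℝ (Fin d)) 1) := by
    rw [hB1, Measure.addHaar_closedBall' volume (x k) hr1pos.le, finrank_euclideanSpace_fin]
  have hemp : empiricalMeasure d n x B2 = ((n:ℝ≥0∞))⁻¹ * (F.card : ℝ≥0∞) := by
    rw [empiricalMeasure, Measure.smul_apply, smul_eq_mul, Measure.finset_sum_apply]
    congr 1
    have h1 : ∀ i : Fin n, Measure.dirac (x i) B2 = if ‖x i - x k‖ ≤ r2 then (1:ℝ≥0∞) else 0 := by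
      intro i
      rw [Measure.dirac_apply' _ measurableSet_closedBall, Set.indicator_apply]
      simp [hB2, mem_closedBall, dist_eq_norm]
    simp_rw [h1, Finset.sum_boole]
    convert rfl
  have hchain : ENNReal.ofReal ρmin * (ENNReal.ofReal (r1 ^ d) *
      volume (closedBall (0 : EuclideanSpace ℝ (Fin d)) 1))
      ≤ ((n:ℝ≥0∞))⁻¹ * (F.card : ℝ≥0∞) := by
    rw [← hemp, ← hpush, Measure.map_apply hT measurableSet_closedBall]
    rw [← hvolB1]
    exact hdens.trans hμB1_le
  set ωR : ℝ := (volume (closedBall (0 : EuclideanSpace ℝ (Fin d)) 1)).toReal with hωR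
  have hωfin : volume (closedBall (0 : EuclideanSpace ℝ (Fin d)) 1) ≠ ⊤ :=
    measure_closedBall_lt_top.ne
  have hωpos : 0 < ωR :=
    ENNReal.toReal_pos (measure_closedBall_pos _ _ one_pos).ne' hωfin
  have hcard : ρmin * (r1 ^ d * ωR) ≤ (n:ℝ)⁻¹ * F.card := by
    have htop : ((n:ℝ≥0∞))⁻¹ * (F.card : ℝ≥0∞) ≠ ⊤ :=
      ENNReal.mul_ne_top (by simp; omega) (ENNReal.natCast_ne_top _)
    have h2 := ENNReal.toReal_mono htop hchain
    rw [ENNReal.toReal_mul, ENNReal.toReal_mul, ENNReal.toReal_mul, ENNReal.toReal_inv,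
      ENNReal.toReal_ofReal hρmin.le, ENNReal.toReal_ofReal (by positivity),
      ENNReal.toReal_natCast, ENNReal.toReal_natCast] at h2
    exact h2
  set D : ℝ := (n:ℝ) * (ρmin * (r1 ^ d * ωR)) with hD
  have hDpos : 0 < D := by rw [hD]; positivity
  have hDm : D ≤ (F.card : ℝ) := by
    have h3 := mul_le_mul_of_nonneg_left hcard hn0.le
    have h4 : (n:ℝ) * ((n:ℝ)⁻¹ * F.card) = F.card := by field_simp
    rw [h4] at h3
    exact h3
  have hcardpos : 0 < (F.card : ℝ) := lt_of_lt_of_le hDpos hDm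
  clear_value D ωR A O B1 B2 F S r1 r2
  -- combine
  have h2p : (2:ℝ) ^ (p+1) = 2 ^ p * 2 := by
    rw [Real.rpow_add (by norm_num : (0:ℝ) < 2), Real.rpow_one]
  have h2ppos : (0:ℝ) < (2:ℝ) ^ p := Real.rpow_pos_of_pos (by norm_num) p
  have step1 : (O/2) ^ p ≤ 2 * A / (a * F.card) := by
    rw [le_div_iff₀ (by positivity)]
    calc (O/2) ^ p * (a * F.card) = (F.card : ℝ) * (a * (O/2) ^ p) := by ring
      _ ≤ 2 * A := hsumkey
  have step2 : O ^ p = 2 ^ p * (O/2) ^ p := by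
    rw [← Real.mul_rpow (by norm_num : (0:ℝ) ≤ 2) hO2]
    congr 1
    ring
  have step3 : 2 * A / (a * F.card) ≤ 2 * A / (a * D) := by
    apply div_le_div_of_nonneg_left (by linarith) (by positivity)
    exact mul_le_mul_of_nonneg_left hDm ha.le
  have hεppos : (0:ℝ) < ε ^ p := Real.rpow_pos_of_pos hε p
  have hrhs : (2 ^ (p + 1) * 4 ^ d / (a * ρmin * ωR * b ^ d)) * ε ^ p * n *
      graphEnergy d n x ε η p f = 2 ^ p * (2 * A / (a * D)) := by
    rw [graphEnergy, ← hA, h2p, hεd, hD, hr1]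
    have h4 : ((b * ε / 4) ^ d : ℝ) = b ^ d * ε ^ d / 4 ^ d := by
      rw [div_pow, mul_pow]
    rw [h4]
    field_simp
  rw [hOsc, hrhs]
  calc O ^ p = 2 ^ p * (O/2) ^ p := step2
    _ ≤ 2 ^ p * (2 * A / (a * F.card)) := mul_le_mul_of_nonneg_left step1 h2ppos.le
    _ ≤ 2 ^ p * (2 * A / (a * D)) := mul_le_mul_of_nonneg_left step3 h2ppos.le
end

section
/- Let d ≥ 1, p ≥ 1, a, b > 0, α ≥ b, and let η : [0,∞) → [0,∞) be nonincreasing with η(t) ≥ a for all t ∈ [0,b]. Let Ω ⊆ ℝ^d be a Borel set and μ a probability measure on Ω whose density ρ with respect to Lebesgue measure satisfies ρ ≥ ρ_min > 0 a.e. on Ω. Let n ≥ 1, x : Fin n → ℝ^d, ε > 0, and let T : Ω → ℝ^d be Borel measurable with pushforward μ ∘ T⁻¹ equal to the empirical measure μ_n and with ‖T(w) − w‖ ≤ bε/8 for μ-a.e. w. Let k, m ∈ Fin n be such that ‖x k − x m‖ ≤ αε and assume that every point y of the line segment joining x k and x m satisfies both B̄(y, bε/2) ⊆ Ω and ‖x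 j − y‖ ≤ bε/8 for some j ∈ Fin n. Then there is a constant C > 0 depending only on p, d, a, b and ρ_min such that for every f : Fin n → ℝ, |f k − f m|^p ≤ C · α^p · ε^p · n · E_n(f). -/
open MeasureTheory Metric Set
open scoped ENNReal BigOperators

lemma jensen_avg {ι : Type*} (s : Finset ι) (hs : s.Nonempty) (z : ι → ℝ)
    (hz : ∀ i ∈ s, 0 ≤ z i) {p : ℝ} (hp : 1 ≤ p) :
    ((∑ i ∈ s, z i) / (s.card : ℝ)) ^ p ≤ (∑ i ∈ s, z i ^ p) / (s.card : ℝ) := by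
  have hc : (0:ℝ) < s.card := by exact_mod_cast Finset.card_pos.mpr hs
  have h := Real.rpow_sum_le_const_mul_sum_rpow_of_nonneg (s := s) (f := z) hp hz
  have hsum : 0 ≤ ∑ i ∈ s, z i := Finset.sum_nonneg hz
  rw [Real.div_rpow hsum hc.le, div_le_div_iff₀ (Real.rpow_pos_of_pos hc p) hc]
  calc (∑ i ∈ s, z i) ^ p * (s.card : ℝ)
      ≤ ((s.card:ℝ) ^ (p-1) * ∑ i ∈ s, z i ^ p) * (s.card : ℝ) :=
        mul_le_mul_of_nonneg_right h hc.le
    _ = (∑ i ∈ s, z i ^ p) * ((s.card:ℝ) ^ (p-1) * (s.card:ℝ) ^ (1:ℝ)) := by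
        rw [Real.rpow_one]; ring
    _ = (∑ i ∈ s, z i ^ p) * (s.card:ℝ) ^ p := by
        rw [← Real.rpow_add hc]; norm_num

lemma chain_bound {n : ℕ} (f : Fin n → ℝ) (w : Fin n → Fin n → ℝ)
    (hw : ∀ i j, 0 ≤ w i j) {p : ℝ} (hp : 1 ≤ p) {a : ℝ} (ha : 0 < a)
    (N : ℕ) (G : ℕ → Finset (Fin n))
    (hne : ∀ t ≤ N, (G t).Nonempty)
    (hedge : ∀ t < N, ∀ i ∈ G t, ∀ j ∈ G (t+1), a ≤ w i j)
    {M : ℝ} (hM : 0 < M)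
    (hcard : ∀ t < N, M ≤ ((G t).card : ℝ) * ((G (t+1)).card : ℝ))
    {k m : Fin n} (hk : G 0 = {k}) (hm : G N = {m}) :
    |f k - f m| ^ p ≤ (N : ℝ) ^ p / (a * M) * ∑ i, ∑ j, w i j * |f i - f j| ^ p := by
  have hp0 : 0 < p := lt_of_lt_of_le one_pos hp
  set S := ∑ i, ∑ j, w i j * |f i - f j| ^ p with hSdef
  have hS : 0 ≤ S := Finset.sum_nonneg fun i _ => Finset.sum_nonneg fun j _ =>
    mul_nonneg (hw i j) (Real.rpow_nonneg (abs_nonneg _) p)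
  rcases Nat.eq_zero_or_pos N with hN0 | hNpos
  · subst hN0
    have : k = m := by rw [hk] at hm; exact Finset.singleton_inj.mp hm
    subst this
    simp only [sub_self, abs_zero]
    rw [Real.zero_rpow hp0.ne', Nat.cast_zero, Real.zero_rpow hp0.ne', zero_div, zero_mul]
  have hNR : (0:ℝ) < N := by exact_mod_cast hNpos
  set g : ℕ → ℝ := fun t => (∑ i ∈ G t, f i) / ((G t).card : ℝ) with hgdef
  have hg0 : g 0 = f k := by simp [hgdef, hk]
  have hgN : g N = f m := by simp [hgdef, hm]
  have step : ∀ t < N, |g t - g (t+1)| ^ p ≤ S / (a * M) := by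
    intro t ht
    have hsne := hne t ht.le
    have hune := hne (t+1) ht
    have hcs : (0:ℝ) < (G t).card := by exact_mod_cast Finset.card_pos.mpr hsne
    have hcu : (0:ℝ) < (G (t+1)).card := by exact_mod_cast Finset.card_pos.mpr hune
    have hrepr : g t - g (t+1)
        = (∑ q ∈ G t ×ˢ G (t+1), (f q.1 - f q.2)) / (((G t).card : ℝ) * ((G (t+1)).card : ℝ)) := by
      rw [Finset.sum_product]
      have h1 : ∑ i ∈ G t, ∑ j ∈ G (t+1), (f i - f j)
          = ((G (t+1)).card : ℝ) * ∑ i ∈ G t, f i - ((G t).card : ℝ) * ∑ j ∈ G (t+1), f j := by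
        simp [Finset.sum_sub_distrib, Finset.sum_const, nsmul_eq_mul, Finset.mul_sum,
          Finset.sum_comm]
      rw [h1, hgdef]
      field_simp
    have habs : |g t - g (t+1)|
        ≤ (∑ q ∈ G t ×ˢ G (t+1), |f q.1 - f q.2|) / (((G t).card : ℝ) * ((G (t+1)).card : ℝ)) := by
      rw [hrepr, abs_div, abs_of_pos (mul_pos hcs hcu)]
      gcongr ?_ / _
      exact Finset.abs_sum_le_sum_abs _ _
    have hcardprod : (((G t ×ˢ G (t+1)).card : ℝ)) = ((G t).card : ℝ) * ((G (t+1)).card : ℝ) := by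
      rw [Finset.card_product]; push_cast; ring
    have h2 : |g t - g (t+1)| ^ p
        ≤ (∑ q ∈ G t ×ˢ G (t+1), |f q.1 - f q.2| ^ p) / (((G t).card : ℝ) * ((G (t+1)).card : ℝ)) := by
      calc |g t - g (t+1)| ^ p
          ≤ ((∑ q ∈ G t ×ˢ G (t+1), |f q.1 - f q.2|) / (((G t).card : ℝ) * ((G (t+1)).card : ℝ))) ^ p :=
            Real.rpow_le_rpow (abs_nonneg _) habs hp0.le
        _ ≤ (∑ q ∈ G t ×ˢ G (t+1), |f q.1 - f q.2| ^ p) / (((G t).card : ℝ) * ((G (t+1)).card : ℝ)) := by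
            rw [← hcardprod]
            exact jensen_avg _ (hsne.product hune) _ (fun q _ => abs_nonneg _) hp
    have h3 : ∑ q ∈ G t ×ˢ G (t+1), |f q.1 - f q.2| ^ p ≤ S / a := by
      have hstep : ∀ q ∈ G t ×ˢ G (t+1), |f q.1 - f q.2| ^ p ≤ (w q.1 q.2 / a) * |f q.1 - f q.2| ^ p := by
        intro q hq
        rw [Finset.mem_product] at hq
        have hwa : a ≤ w q.1 q.2 := hedge t ht q.1 hq.1 q.2 hq.2
        have h1le : 1 ≤ w q.1 q.2 / a := (one_le_div ha).mpr hwa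
        nth_rewrite 1 [← one_mul (|f q.1 - f q.2| ^ p)]
        exact mul_le_mul_of_nonneg_right h1le (Real.rpow_nonneg (abs_nonneg _) p)
      calc ∑ q ∈ G t ×ˢ G (t+1), |f q.1 - f q.2| ^ p
          ≤ ∑ q ∈ G t ×ˢ G (t+1), (w q.1 q.2 / a) * |f q.1 - f q.2| ^ p :=
            Finset.sum_le_sum hstep
        _ ≤ ∑ q ∈ (Finset.univ : Finset (Fin n × Fin n)), (w q.1 q.2 / a) * |f q.1 - f q.2| ^ p := by
            apply Finset.sum_le_sum_of_subset_of_nonneg (Finset.subset_univ _)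
            intro q _ _
            exact mul_nonneg (div_nonneg (hw _ _) ha.le) (Real.rpow_nonneg (abs_nonneg _) p)
        _ = S / a := by
            rw [hSdef, ← Finset.univ_product_univ, Finset.sum_product, Finset.sum_div]
            congr 1; ext i
            rw [Finset.sum_div]
            congr 1; ext j
            ring
    have hMle : M ≤ ((G t).card : ℝ) * ((G (t+1)).card : ℝ) := hcard t ht
    calc |g t - g (t+1)| ^ p
        ≤ (∑ q ∈ G t ×ˢ G (t+1), |f q.1 - f q.2| ^ p) / (((G t).card : ℝ) * ((G (t+1)).card : ℝ)) := h2
      _ ≤ (S / a) / M := by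
          apply div_le_div₀ (by positivity) h3 hM hMle
      _ = S / (a * M) := by rw [div_div]
  -- telescoping
  have htel : f k - f m = ∑ t ∈ Finset.range N, (g t - g (t+1)) := by
    rw [Finset.sum_range_sub' g N, hg0, hgN]
  have habs : |f k - f m| ≤ ∑ t ∈ Finset.range N, |g t - g (t+1)| := by
    rw [htel]; exact Finset.abs_sum_le_sum_abs _ _
  calc |f k - f m| ^ p
      ≤ (∑ t ∈ Finset.range N, |g t - g (t+1)|) ^ p :=
        Real.rpow_le_rpow (abs_nonneg _) habs hp0.le
    _ ≤ ((N:ℝ)) ^ (p-1) * ∑ t ∈ Finset.range N, |g t - g (t+1)| ^ p := by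
        have := Real.rpow_sum_le_const_mul_sum_rpow_of_nonneg (s := Finset.range N)
          (f := fun t => |g t - g (t+1)|) hp (fun t _ => abs_nonneg _)
        simpa using this
    _ ≤ ((N:ℝ)) ^ (p-1) * (N * (S / (a * M))) := by
        apply mul_le_mul_of_nonneg_left _ (Real.rpow_nonneg hNR.le _)
        calc ∑ t ∈ Finset.range N, |g t - g (t+1)| ^ p
            ≤ ∑ _t ∈ Finset.range N, S / (a * M) :=
              Finset.sum_le_sum fun t ht => step t (Finset.mem_range.mp ht)
          _ = N * (S / (a * M)) := by
              rw [Finset.sum_const, Finset.card_range, nsmul_eq_mul]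
    _ = (N : ℝ) ^ p / (a * M) * S := by
        have hpow : (N:ℝ) ^ (p-1) * (N:ℝ) = (N:ℝ) ^ p := by
          nth_rewrite 2 [← Real.rpow_one (N:ℝ)]
          rw [← Real.rpow_add hNR]; norm_num
        rw [← hpow]; ring

lemma card_lower {d : ℕ} {ρmin : ℝ} (hρmin : 0 < ρmin)
    {Ω : Set (EuclideanSpace ℝ (Fin d))} (hΩ : MeasurableSet Ω)
    {ρ : EuclideanSpace ℝ (Fin d) → ℝ} {μ : Measure (EuclideanSpace ℝ (Fin d))}
    (hμ : μ = (volume.restrict Ω).withDensity (fun w => ENNReal.ofReal (ρ w)))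
    (hρ : ∀ᵐ w ∂(volume.restrict Ω), ρmin ≤ ρ w)
    {n : ℕ} (hn : 1 ≤ n) {x : Fin n → EuclideanSpace ℝ (Fin d)}
    {T : EuclideanSpace ℝ (Fin d) → EuclideanSpace ℝ (Fin d)} (hT : Measurable T)
    (hmap : μ.map T = empiricalMeasure d n x)
    {r : ℝ} (hTae : ∀ᵐ w ∂μ, ‖T w - w‖ ≤ r)
    (y : EuclideanSpace ℝ (Fin d)) (R₁ R₂ : ℝ) (hR₁ : 0 ≤ R₁) (hR₂ : R₁ + r ≤ R₂)
    (hball : closedBall y R₁ ⊆ Ω) :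
    ρmin * (R₁ ^ d * (volume (closedBall (0 : EuclideanSpace ℝ (Fin d)) 1)).toReal) * n ≤
      ((Finset.univ.filter (fun i : Fin n => ‖x i - y‖ ≤ R₂)).card : ℝ) := by
  set V := volume (closedBall (0 : EuclideanSpace ℝ (Fin d)) 1) with hV
  have hVtop : V ≠ ⊤ := measure_closedBall_lt_top.ne
  -- Step 1: density lower bound
  have step1 : ENNReal.ofReal ρmin * volume (closedBall y R₁) ≤ μ (closedBall y R₁) := by
    rw [hμ, withDensity_apply _ measurableSet_closedBall]
    have heq : ENNReal.ofReal ρmin * volume (closedBall y R₁)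
        = ∫⁻ _ in closedBall y R₁, ENNReal.ofReal ρmin ∂(volume.restrict Ω) := by
      rw [setLIntegral_const, Measure.restrict_apply measurableSet_closedBall,
        Set.inter_eq_self_of_subset_left hball]
    rw [heq]
    apply lintegral_mono_ae
    filter_upwards [ae_restrict_of_ae hρ] with w hw
    exact ENNReal.ofReal_le_ofReal hw
  -- Step 2: volume of ball
  have step2 : volume (closedBall y R₁) = ENNReal.ofReal (R₁ ^ d) * V := by
    rw [hV, Measure.addHaar_closedBall' volume y hR₁, finrank_euclideanSpace_fin]
  -- Step 3: transport
  have step3 : μ (closedBall y R₁) ≤ μ (T ⁻¹' closedBall y R₂) := by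
    apply measure_mono_ae
    filter_upwards [hTae] with w hw hw1
    have hw1' : dist w y ≤ R₁ := hw1
    rw [dist_eq_norm] at hw1'
    show T w ∈ closedBall y R₂
    rw [mem_closedBall, dist_eq_norm]
    calc ‖T w - y‖ ≤ ‖T w - w‖ + ‖w - y‖ := norm_sub_le_norm_sub_add_norm_sub _ _ _
      _ ≤ r + R₁ := add_le_add hw hw1'
      _ ≤ R₂ := by linarith
  -- Step 4: empirical measure of ball
  have step4 : μ (T ⁻¹' closedBall y R₂)
      = ((n : ℝ≥0∞))⁻¹ * ((Finset.univ.filter (fun i : Fin n => ‖x i - y‖ ≤ R₂)).card : ℝ≥0∞) := by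
    rw [← Measure.map_apply hT measurableSet_closedBall, hmap]
    rw [empiricalMeasure, Measure.smul_apply, smul_eq_mul,
      Measure.finset_sum_apply]
    congr 1
    have : ∀ i : Fin n, Measure.dirac (x i) (closedBall y R₂)
        = if ‖x i - y‖ ≤ R₂ then (1 : ℝ≥0∞) else 0 := by
      intro i
      rw [Measure.dirac_apply' _ measurableSet_closedBall]
      by_cases h : ‖x i - y‖ ≤ R₂
      · rw [if_pos h, Set.indicator_of_mem (by rw [mem_closedBall, dist_eq_norm]; exact h)]
        rfl
      · rw [if_neg h, Set.indicator_of_notMem (by rw [mem_closedBall, dist_eq_norm]; exact h)]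
    rw [Finset.sum_congr rfl fun i _ => this i, Finset.sum_boole]
  have key : ENNReal.ofReal ρmin * (ENNReal.ofReal (R₁ ^ d) * V)
      ≤ ((n : ℝ≥0∞))⁻¹ * ((Finset.univ.filter (fun i : Fin n => ‖x i - y‖ ≤ R₂)).card : ℝ≥0∞) := by
    rw [← step4, ← step2]
    exact le_trans step1 step3
  -- convert to reals
  have hn0 : (n : ℝ≥0∞) ≠ 0 := Nat.cast_ne_zero.mpr (by omega)
  have hrhs_ne : ((n : ℝ≥0∞))⁻¹ * ((Finset.univ.filter (fun i : Fin n => ‖x i - y‖ ≤ R₂)).card : ℝ≥0∞) ≠ ⊤ :=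
    ENNReal.mul_ne_top (ENNReal.inv_ne_top.mpr hn0) (ENNReal.natCast_ne_top _)
  have hreal := ENNReal.toReal_mono hrhs_ne key
  rw [ENNReal.toReal_mul, ENNReal.toReal_mul, ENNReal.toReal_mul,
    ENNReal.toReal_ofReal hρmin.le, ENNReal.toReal_ofReal (pow_nonneg hR₁ d),
    ENNReal.toReal_inv, ENNReal.toReal_natCast, ENNReal.toReal_natCast] at hreal
  have hnR : (0:ℝ) < n := by exact_mod_cast hn
  rw [mul_comm ((n:ℝ))⁻¹ _, ← div_eq_mul_inv] at hreal
  calc ρmin * (R₁ ^ d * V.toReal) * n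
      ≤ (((Finset.univ.filter (fun i : Fin n => ‖x i - y‖ ≤ R₂)).card : ℝ) / n) * n := by
        apply mul_le_mul_of_nonneg_right _ hnR.le
        exact hreal
    _ = ((Finset.univ.filter (fun i : Fin n => ‖x i - y‖ ≤ R₂)).card : ℝ) := by
        field_simp

set_option maxHeartbeats 2000000 in
theorem stmt1 (d : ℕ) (hd : 1 ≤ d) (p a b ρmin : ℝ)
    (hp : 1 ≤ p) (ha : 0 < a) (hb : 0 < b) (hρmin : 0 < ρmin) :
    ∃ C : ℝ, 0 < C ∧
      ∀ (α : ℝ), b ≤ α →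
      ∀ (η : ℝ → ℝ), (∀ t, 0 ≤ t → 0 ≤ η t) → AntitoneOn η (Set.Ici 0) →
        (∀ t ∈ Set.Icc (0 : ℝ) b, a ≤ η t) →
      ∀ (Ω : Set (EuclideanSpace ℝ (Fin d))), MeasurableSet Ω →
      ∀ (ρ : EuclideanSpace ℝ (Fin d) → ℝ) (μ : Measure (EuclideanSpace ℝ (Fin d))),
        μ = (volume.restrict Ω).withDensity (fun w => ENNReal.ofReal (ρ w)) →
        IsProbabilityMeasure μ →
        (∀ᵐ w ∂(volume.restrict Ω), ρmin ≤ ρ w) →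
      ∀ (n : ℕ), 1 ≤ n →
      ∀ (x : Fin n → EuclideanSpace ℝ (Fin d)) (ε : ℝ), 0 < ε →
      ∀ (T : EuclideanSpace ℝ (Fin d) → EuclideanSpace ℝ (Fin d)), Measurable T →
        μ.map T = empiricalMeasure d n x →
        (∀ᵐ w ∂μ, ‖T w - w‖ ≤ b * ε / 8) →
      ∀ (k m : Fin n), ‖x k - x m‖ ≤ α * ε →
        (∀ y ∈ segment ℝ (x k) (x m),
          closedBall y (b * ε / 2) ⊆ Ω ∧ ∃ j : Fin n, ‖x j - y‖ ≤ b * ε / 8) →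
      ∀ f : Fin n → ℝ,
        |f k - f m| ^ p ≤ C * α ^ p * ε ^ p * n * graphEnergy d n x ε η p f := by
  set Vd : ℝ := (volume (closedBall (0 : EuclideanSpace ℝ (Fin d)) 1)).toReal with hVddef
  have hVd : 0 < Vd :=
    ENNReal.toReal_pos (measure_closedBall_pos volume _ one_pos).ne' measure_closedBall_lt_top.ne
  set c : ℝ := ρmin * ((b / 4) ^ d * Vd) with hcdef
  have hc : 0 < c := by positivity
  refine ⟨(7 / b) ^ p / (a * c), by positivity, ?_⟩
  intro α hα η hη0 _hηanti hηa Ω hΩ ρ μ hμ _hprob hρ n hn x ε hε T hTmeas hmap hTae k m hkm hseg f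
  have hαpos : 0 < α := lt_of_lt_of_le hb hα
  -- chain length
  set N := ⌈4 * α / b⌉₊ with hNdef
  have hNge : 4 * α / b ≤ (N : ℝ) := Nat.le_ceil _
  have hNlt : (N : ℝ) < 4 * α / b + 1 := Nat.ceil_lt_add_one (by positivity)
  have h1N : (1 : ℝ) ≤ (N : ℝ) := by
    refine le_trans ?_ hNge
    rw [le_div_iff₀ hb]; nlinarith
  have hNR : (0 : ℝ) < (N : ℝ) := lt_of_lt_of_le one_pos h1N
  -- chain points
  set y : ℕ → EuclideanSpace ℝ (Fin d) :=
    fun t => x k + ((t : ℝ) / (N : ℝ)) • (x m - x k) with hy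
  have hy0 : y 0 = x k := by simp [hy]
  have hyN : y N = x m := by
    simp only [hy, div_self hNR.ne', one_smul]
    abel
  have hyseg : ∀ t, t ≤ N → y t ∈ segment ℝ (x k) (x m) := by
    intro t ht
    rw [segment_eq_image']
    exact ⟨(t : ℝ) / N, ⟨by positivity, by rw [div_le_one hNR]; exact_mod_cast ht⟩, rfl⟩
  have hystep : ∀ t : ℕ, ‖y t - y (t + 1)‖ ≤ b * ε / 4 := by
    intro t
    have h1 : y t - y (t + 1) = ((t : ℝ) / N - ((t + 1 : ℕ) : ℝ) / N) • (x m - x k) := by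
      simp only [hy, sub_smul]; abel
    have h2 : |(t : ℝ) / N - ((t + 1 : ℕ) : ℝ) / N| = 1 / N := by
      push_cast
      rw [show (t : ℝ) / N - ((t : ℝ) + 1) / N = -(1 / N) by ring, abs_neg,
        abs_of_pos (by positivity)]
    rw [h1, norm_smul, Real.norm_eq_abs, h2]
    have h3 : ‖x m - x k‖ ≤ α * ε := by rw [norm_sub_rev]; exact hkm
    have h4 : α * ε ≤ b * ε / 4 * N := by
      have : b * ε / 4 * (4 * α / b) = α * ε := by field_simp
      nlinarith [mul_le_mul_of_nonneg_left hNge (by positivity : (0:ℝ) ≤ b * ε / 4)]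
    rw [div_mul_eq_mul_div, one_mul, div_le_iff₀ hNR]
    linarith
  -- the finsets
  set A : ℕ → Finset (Fin n) :=
    fun s => Finset.univ.filter (fun i => ‖x i - y s‖ ≤ b * ε / 4 + b * ε / 8) with hA
  set M : ℝ := ρmin * ((b * ε / 4) ^ d * Vd) * n with hMdef
  have hM : 0 < M := by positivity
  have hAcard : ∀ s, s ≤ N → M ≤ ((A s).card : ℝ) := by
    intro s hs
    exact card_lower hρmin hΩ hμ hρ hn hTmeas hmap hTae (y s) (b * ε / 4) (b * ε / 4 + b * ε / 8)
      (by positivity) le_rfl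
      (subset_trans (closedBall_subset_closedBall (by nlinarith [mul_pos hb hε])) (hseg (y s) (hyseg s hs)).1)
  have hAne : ∀ s, s ≤ N → (A s).Nonempty := by
    intro s hs
    obtain ⟨j, hj⟩ := (hseg (y s) (hyseg s hs)).2
    exact ⟨j, Finset.mem_filter.mpr ⟨Finset.mem_univ _, by nlinarith [mul_pos hb hε]⟩⟩
  have hA1 : ∀ s, s ≤ N → (1 : ℝ) ≤ ((A s).card : ℝ) := by
    intro s hs
    exact_mod_cast Nat.one_le_iff_ne_zero.mpr (Finset.card_pos.mpr (hAne s hs)).ne'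
  have hAmem : ∀ s, ∀ i ∈ A s, ‖x i - y s‖ ≤ b * ε / 4 + b * ε / 8 := by
    intro s i hi
    exact (Finset.mem_filter.mp hi).2
  set G : ℕ → Finset (Fin n) :=
    fun t => if t = 0 then {k} else if t ≤ N + 1 then A (t - 1) else {m} with hG
  have hG0 : G 0 = {k} := by simp [hG]
  have hGlast : G (N + 2) = {m} := by
    simp only [hG]
    rw [if_neg (by omega), if_neg (by omega)]
  have hGmid : ∀ t, 1 ≤ t → t ≤ N + 1 → G t = A (t - 1) := by
    intro t h1 h2
    simp only [hG]
    rw [if_neg (by omega), if_pos h2]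
  have hne : ∀ t, t ≤ N + 2 → (G t).Nonempty := by
    intro t ht
    rcases Nat.eq_zero_or_pos t with h0 | h1
    · subst h0; rw [hG0]; exact Finset.singleton_nonempty _
    · by_cases h2 : t ≤ N + 1
      · rw [hGmid t h1 h2]; exact hAne (t - 1) (by omega)
      · have : t = N + 2 := by omega
        subst this; rw [hGlast]; exact Finset.singleton_nonempty _
  have hwab : ∀ i j : Fin n, ‖x i - x j‖ ≤ b * ε → a ≤ η (‖x i - x j‖ / ε) := by
    intro i j h
    apply hηa
    constructor
    · positivity
    · rw [div_le_iff₀ hε]; linarith [h]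
  have hedge : ∀ t, t < N + 2 → ∀ i ∈ G t, ∀ j ∈ G (t + 1), a ≤ η (‖x i - x j‖ / ε) := by
    intro t ht i hi j hj
    apply hwab
    rcases Nat.eq_zero_or_pos t with h0 | h1
    · subst h0
      rw [hG0, Finset.mem_singleton] at hi
      subst hi
      rw [hGmid 1 le_rfl (by omega)] at hj
      have := hAmem 0 j hj
      rw [← hy0, norm_sub_rev]
      nlinarith [mul_pos hb hε]
    · by_cases h2 : t ≤ N
      · rw [hGmid t h1 (by omega)] at hi
        rw [hGmid (t + 1) (by omega) (by omega)] at hj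
        have hii := hAmem (t - 1) i hi
        have hjj := hAmem (t + 1 - 1) j hj
        have htt : t + 1 - 1 = t := by omega
        rw [htt] at hjj
        have hstep := hystep (t - 1)
        have htt2 : t - 1 + 1 = t := by omega
        rw [htt2] at hstep
        have hsplit : x i - x j = (x i - y (t - 1)) + ((y (t - 1) - y t) + (y t - x j)) := by
          abel
        calc ‖x i - x j‖ ≤ ‖x i - y (t - 1)‖ + (‖y (t - 1) - y t‖ + ‖y t - x j‖) := by
              rw [hsplit]
              exact le_trans (norm_add_le _ _) (by gcongr; exact norm_add_le _ _)
          _ ≤ b * ε := by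
              rw [norm_sub_rev (y t)]
              nlinarith [mul_pos hb hε]
      · have h3 : t = N + 1 := by omega
        subst h3
        rw [hGmid (N + 1) (by omega) le_rfl] at hi
        rw [hGlast, Finset.mem_singleton] at hj
        subst hj
        have hii := hAmem (N + 1 - 1) i hi
        have htt : N + 1 - 1 = N := by omega
        rw [htt] at hii
        rw [← hyN]
        nlinarith [mul_pos hb hε]
  have hcard : ∀ t, t < N + 2 → M ≤ ((G t).card : ℝ) * ((G (t + 1)).card : ℝ) := by
    intro t ht
    rcases Nat.eq_zero_or_pos t with h0 | h1
    · subst h0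
      rw [hG0, hGmid 1 le_rfl (by omega)]
      simp only [Finset.card_singleton, Nat.cast_one, one_mul]
      exact hAcard 0 (by omega)
    · by_cases h2 : t ≤ N
      · rw [hGmid t h1 (by omega), hGmid (t + 1) (by omega) (by omega)]
        have e1 := hAcard (t - 1) (by omega)
        have e2 := hA1 (t + 1 - 1) (by omega)
        calc M = M * 1 := (mul_one M).symm
          _ ≤ ((A (t - 1)).card : ℝ) * ((A (t + 1 - 1)).card : ℝ) :=
              mul_le_mul e1 e2 zero_le_one (le_trans hM.le e1)
      · have h3 : t = N + 1 := by omega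
        subst h3
        rw [hGmid (N + 1) (by omega) le_rfl, hGlast]
        simp only [Finset.card_singleton, Nat.cast_one, mul_one]
        exact hAcard (N + 1 - 1) (by omega)
  have main := chain_bound f (fun i j => η (‖x i - x j‖ / ε))
    (fun i j => hη0 _ (by positivity)) hp ha (N + 2) G hne
    (fun t ht => hedge t ht) hM (fun t ht => hcard t ht) hG0 hGlast
  refine le_trans main ?_
  unfold graphEnergy
  set S : ℝ := ∑ i, ∑ j, η (‖x i - x j‖ / ε) * |f i - f j| ^ p with hSdef
  have hS : 0 ≤ S := Finset.sum_nonneg fun i _ => Finset.sum_nonneg fun j _ =>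
    mul_nonneg (hη0 _ (by positivity)) (Real.rpow_nonneg (abs_nonneg _) p)
  have hp0 : 0 < p := lt_of_lt_of_le one_pos hp
  have hnR : (0 : ℝ) < n := by exact_mod_cast hn
  have hεp : (0 : ℝ) < ε ^ p := Real.rpow_pos_of_pos hε p
  have hεd : (0 : ℝ) < ε ^ d := by positivity
  have hrw : ε ^ (p + (d : ℝ)) = ε ^ p * ε ^ d := by
    rw [Real.rpow_add hε, Real.rpow_natCast]
  have hMeq : M = c * ε ^ d * n := by
    rw [hMdef, hcdef, show b * ε / 4 = (b / 4) * ε by ring, mul_pow]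
    ring
  have hNb : ((N + 2 : ℕ) : ℝ) ≤ 7 / b * α := by
    push_cast
    have hh1 : (N : ℝ) * b < (4 * α / b + 1) * b := mul_lt_mul_of_pos_right hNlt hb
    have hh2 : (4 * α / b + 1) * b = 4 * α + b := by field_simp
    rw [div_mul_eq_mul_div, le_div_iff₀ hb]
    nlinarith
  have hpow : ((N + 2 : ℕ) : ℝ) ^ p ≤ (7 / b) ^ p * α ^ p := by
    rw [← Real.mul_rpow (by positivity) hαpos.le]
    exact Real.rpow_le_rpow (by positivity) hNb hp0.le
  have hcoeff : ((N + 2 : ℕ) : ℝ) ^ p / (a * M)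
      ≤ (7 / b) ^ p / (a * c) * α ^ p * ε ^ p * (n : ℝ) * (1 / (ε ^ (p + (d : ℝ)) * (n : ℝ) ^ 2)) := by
    have heq : (7 / b) ^ p / (a * c) * α ^ p * ε ^ p * (n : ℝ) * (1 / (ε ^ (p + (d : ℝ)) * (n : ℝ) ^ 2))
        = ((7 / b) ^ p * α ^ p) / (a * M) := by
      rw [hrw, hMeq]
      field_simp
    rw [heq]
    have haM : 0 < a * M := mul_pos ha hM
    exact div_le_div_of_nonneg_right hpow haM.le
  calc ((N + 2 : ℕ) : ℝ) ^ p / (a * M) * S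
      ≤ ((7 / b) ^ p / (a * c) * α ^ p * ε ^ p * (n : ℝ) * (1 / (ε ^ (p + (d : ℝ)) * (n : ℝ) ^ 2))) * S :=
        mul_le_mul_of_nonneg_right hcoeff hS
    _ = (7 / b) ^ p / (a * c) * α ^ p * ε ^ p * (n : ℝ) * ((1 / (ε ^ (p + (d : ℝ)) * (n : ℝ) ^ 2)) * S) := by
        ring
end

section
/- Let d ≥ 1, p ≥ 1, a, b > 0, ε > 0, and let η : [0,∞) → [0,∞) satisfy η(t) ≥ a for all t ∈ [0,b]. Then for any n ≥ 1, any points x : Fin n → ℝ^d, any f : Fin n → ℝ and any k ∈ Fin n, (osc_{bε/2}(f)(k))^p · #{j ∈ Fin n : ‖x j − x k‖ ≤ bε/2} ≤ (2^{p+1}/a) · ε^{p+d} · n² · E_n(f). -/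
open MeasureTheory Metric Set
open scoped ENNReal BigOperators

theorem stmt2 (d n : ℕ) (hd : 1 ≤ d) (hn : 1 ≤ n)
    (p a b ε : ℝ) (hp : 1 ≤ p) (ha : 0 < a) (hb : 0 < b) (hε : 0 < ε)
    (η : ℝ → ℝ) (hηnonneg : ∀ t, 0 ≤ t → 0 ≤ η t)
    (hηa : ∀ t ∈ Set.Icc (0 : ℝ) b, a ≤ η t)
    (x : Fin n → EuclideanSpace ℝ (Fin d))
    (f : Fin n → ℝ) (k : Fin n) :
    oscAt d n x f (b * ε / 2) k ^ p *
        (({j : Fin n | ‖x j - x k‖ ≤ b * ε / 2}).ncard : ℝ) ≤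
      (2 ^ (p + 1) / a) * ε ^ (p + (d : ℝ)) * (n : ℝ) ^ 2 * graphEnergy d n x ε η p f := by
  classical
  have hppos : (0:ℝ) < p := lt_of_lt_of_le one_pos hp
  set r := b * ε / 2 with hr
  set S : Set (Fin n) := {j | ‖x j - x k‖ ≤ r} with hSdef
  have hrpos : 0 < r := by positivity
  have hk : k ∈ S := by
    simp only [hSdef, Set.mem_setOf_eq, sub_self, norm_zero]
    exact hrpos.le
  have hfin : (f '' S).Finite := S.toFinite.image f
  have hne : (f '' S).Nonempty := ⟨f k, k, hk, rfl⟩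
  obtain ⟨imax, hmaxS, hmax⟩ := hne.csSup_mem hfin
  obtain ⟨imin, hminS, hmin⟩ := hne.csInf_mem hfin
  have hosc : oscAt d n x f r k = f imax - f imin := by
    rw [oscAt, show {j | ‖x j - x k‖ ≤ r} = S from rfl, ← hmax, ← hmin]
  have hmm : f imin ≤ f imax := by
    rw [hmin, hmax]; exact csInf_le_csSup hne hfin.bddBelow hfin.bddAbove
  set Fs : Finset (Fin n) := S.toFinset with hFs
  have hcard : (S.ncard : ℝ) = (Fs.card : ℝ) := by
    rw [Set.ncard_eq_toFinset_card' S]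
  set T := ∑ i, ∑ j, η (‖x i - x j‖ / ε) * |f i - f j| ^ p with hT
  have htermnn : ∀ i j : Fin n, 0 ≤ η (‖x i - x j‖ / ε) * |f i - f j| ^ p := by
    intro i j
    exact mul_nonneg (hηnonneg _ (by positivity)) (Real.rpow_nonneg (abs_nonneg _) p)
  have key : ∀ i0 ∈ S, ∑ j ∈ Fs, |f i0 - f j| ^ p ≤ T / a := by
    intro i0 hi0
    rw [le_div_iff₀ ha, mul_comm, Finset.mul_sum]
    calc ∑ j ∈ Fs, a * |f i0 - f j| ^ p
        ≤ ∑ j ∈ Fs, η (‖x i0 - x j‖ / ε) * |f i0 - f j| ^ p := by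
          apply Finset.sum_le_sum
          intro j hj
          have hjS : j ∈ S := Set.mem_toFinset.mp hj
          have hdist : ‖x i0 - x j‖ ≤ b * ε := by
            have h1 : dist (x i0) (x j) ≤ dist (x i0) (x k) + dist (x j) (x k) := by
              rw [dist_comm (x j) (x k)]; exact dist_triangle _ _ _
            rw [dist_eq_norm, dist_eq_norm, dist_eq_norm] at h1
            have h2 : ‖x i0 - x k‖ ≤ r := hi0
            have h3 : ‖x j - x k‖ ≤ r := hjS
            have : r + r = b * ε := by rw [hr]; ring
            linarith
          have harg : ‖x i0 - x j‖ / ε ∈ Set.Icc (0:ℝ) b := by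
            constructor
            · positivity
            · rw [div_le_iff₀ hε]; linarith [hdist]
          exact mul_le_mul_of_nonneg_right (hηa _ harg)
            (Real.rpow_nonneg (abs_nonneg _) p)
      _ ≤ ∑ j, η (‖x i0 - x j‖ / ε) * |f i0 - f j| ^ p :=
          Finset.sum_le_sum_of_subset_of_nonneg (Finset.subset_univ _)
            (fun j _ _ => htermnn i0 j)
      _ ≤ T :=
          Finset.single_le_sum
            (f := fun i => ∑ j, η (‖x i - x j‖ / ε) * |f i - f j| ^ p)
            (fun i _ => Finset.sum_nonneg fun j _ => htermnn i j)
            (Finset.mem_univ i0)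
  have hE : (0:ℝ) < ε ^ (p + (d:ℝ)) := Real.rpow_pos_of_pos hε _
  have hN : (0:ℝ) < (n:ℝ) ^ 2 := by
    have : (0:ℝ) < (n:ℝ) := by exact_mod_cast hn
    positivity
  have hRHS : (2 ^ (p + 1) / a) * ε ^ (p + (d : ℝ)) * (n : ℝ) ^ 2 *
      graphEnergy d n x ε η p f = 2 ^ (p + 1) / a * T := by
    rw [graphEnergy, ← hT]
    field_simp
  rw [hosc, hRHS, hcard]
  have hpt : ∀ j ∈ Fs, (f imax - f imin) ^ p ≤
      2 ^ p * (|f imax - f j| ^ p + |f imin - f j| ^ p) := by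
    intro j hj
    set u := |f imax - f j| with hu
    set v := |f imin - f j| with hv
    have hun : 0 ≤ u := abs_nonneg _
    have hvn : 0 ≤ v := abs_nonneg _
    have h1 : f imax - f imin ≤ u + v := by
      have := le_abs_self (f imax - f j)
      have := neg_abs_le (f imin - f j)
      simp only [← hu, ← hv] at *
      linarith
    have hMn : 0 ≤ max u v := le_trans hun (le_max_left _ _)
    have h2 : u + v ≤ 2 * max u v := by
      have := le_max_left u v
      have := le_max_right u v
      linarith
    calc (f imax - f imin) ^ p ≤ (2 * max u v) ^ p :=
          Real.rpow_le_rpow (sub_nonneg.mpr hmm) (h1.trans h2) hppos.le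
      _ = 2 ^ p * (max u v) ^ p := Real.mul_rpow (by norm_num) hMn
      _ ≤ 2 ^ p * (u ^ p + v ^ p) := by
          apply mul_le_mul_of_nonneg_left _ (Real.rpow_nonneg (by norm_num) p)
          rcases max_choice u v with h | h <;> rw [h]
          · exact le_add_of_nonneg_right (Real.rpow_nonneg hvn p)
          · exact le_add_of_nonneg_left (Real.rpow_nonneg hun p)
  calc (f imax - f imin) ^ p * (Fs.card : ℝ)
      = ∑ _j ∈ Fs, (f imax - f imin) ^ p := by
        rw [Finset.sum_const, nsmul_eq_mul, mul_comm]
    _ ≤ ∑ j ∈ Fs, 2 ^ p * (|f imax - f j| ^ p + |f imin - f j| ^ p) :=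
        Finset.sum_le_sum hpt
    _ = 2 ^ p * ((∑ j ∈ Fs, |f imax - f j| ^ p) + ∑ j ∈ Fs, |f imin - f j| ^ p) := by
        rw [← Finset.mul_sum, Finset.sum_add_distrib]
    _ ≤ 2 ^ p * (T / a + T / a) :=
        mul_le_mul_of_nonneg_left (add_le_add (key imax hmaxS) (key imin hminS))
          (Real.rpow_nonneg (by norm_num) p)
    _ = 2 ^ (p + 1) / a * T := by
        rw [Real.rpow_add (by norm_num : (0:ℝ) < 2), Real.rpow_one]
        ring
end

section
/- Let d ≥ 1, p ≥ 1, a, b > 0, and let η : [0,∞) → [0,∞) be nonincreasing with η(t) ≥ a for all t ∈ [0,b]. Let Ω ⊆ ℝ^d be a Borel set and μ a probability measure on Ω whose density with respect to Lebesgue measure satisfies ρ ≥ ρ_min > 0 a.e. on Ω. Let n ≥ 1, let x : Fin n → ℝ^d be injective with empirical measure μ_n, let ε > 0 and s ≥ 0 with ε̃ := ε − 2s/b > 0, and let T : Ω → ℝ^d be Borel measurable with pushforward μ ∘ T⁻¹ = μ_n and ‖T(w) − w‖ ≤ s for μ-a.e. w. Let f : Fin n → ℝ and let F : Ω → ℝ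 be measurable such that for μ-a.e. w there is i ∈ Fin n with T(w) = x i and F(w) = f i. Then ε̃^{-(p+d)} · ∫_Ω ∫_Ω a · 1{‖w − z‖ < b ε̃} · |F(w) − F(z)|^p dz dw ≤ (ε/ε̃)^{p+d} · ρ_min^{-2} · E_n(f); that is, the nonlocal p-Dirichlet energy of F over Ω at scale ε̃ with kernel profile a·1_{[0,b)} is at most (ε/ε̃)^{p+d} ρ_min^{-2} times the graph p-Dirichlet energy of f with kernel profile η. -/
open MeasureTheory Metric Set
open scoped ENNReal BigOperators

theorem stmt4 (d n : ℕ) (hd : 1 ≤ d) (hn : 1 ≤ n)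
    (p a b ρmin ε s εt : ℝ) (hp : 1 ≤ p) (ha : 0 < a) (hb : 0 < b)
    (hρmin : 0 < ρmin) (hε : 0 < ε) (hs : 0 ≤ s)
    (hεt : εt = ε - 2 * s / b) (hεtpos : 0 < εt)
    (η : ℝ → ℝ) (hηnonneg : ∀ t, 0 ≤ t → 0 ≤ η t)
    (hηmono : AntitoneOn η (Set.Ici 0))
    (hηa : ∀ t ∈ Set.Icc (0 : ℝ) b, a ≤ η t)
    (Ω : Set (EuclideanSpace ℝ (Fin d))) (hΩ : MeasurableSet Ω)
    (ρ : EuclideanSpace ℝ (Fin d) → ℝ)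
    (μ : Measure (EuclideanSpace ℝ (Fin d)))
    (hμ : μ = (volume.restrict Ω).withDensity (fun w => ENNReal.ofReal (ρ w)))
    (hprob : IsProbabilityMeasure μ)
    (hρ : ∀ᵐ w ∂(volume.restrict Ω), ρmin ≤ ρ w)
    (x : Fin n → EuclideanSpace ℝ (Fin d)) (hxinj : Function.Injective x)
    (T : EuclideanSpace ℝ (Fin d) → EuclideanSpace ℝ (Fin d)) (hT : Measurable T)
    (hpush : μ.map T = empiricalMeasure d n x)
    (hclose : ∀ᵐ w ∂μ, ‖T w - w‖ ≤ s)
    (f : Fin n → ℝ)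
    (F : EuclideanSpace ℝ (Fin d) → ℝ) (hF : Measurable F)
    (hFf : ∀ᵐ w ∂μ, ∃ i : Fin n, T w = x i ∧ F w = f i) :
    εt ^ (-(p + (d : ℝ))) *
        ∫ w in Ω, ∫ z in Ω,
          (if ‖w - z‖ < b * εt then a else 0) * |F w - F z| ^ p ≤
      (ε / εt) ^ (p + (d : ℝ)) / ρmin ^ 2 * graphEnergy d n x ε η p f := by
  classical
  have hεtnn : (0:ℝ) ≤ εt := hεtpos.le
  have hnne : n ≠ 0 := by omega
  have hnE : ((n:ℝ≥0∞))⁻¹ ≠ ⊤ := ENNReal.inv_ne_top.mpr (Nat.cast_ne_zero.mpr hnne)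
  have hnR : (0:ℝ) < (n:ℝ) := by exact_mod_cast hn
  have hbε : b * εt + 2 * s = b * ε := by
    rw [hεt]; field_simp; ring
  -- the function on points
  set gf : EuclideanSpace ℝ (Fin d) → ℝ := fun y => ∑ i, if y = x i then f i else 0 with hgf
  have hgfx : ∀ i, gf (x i) = f i := by
    intro i
    rw [hgf]
    simp only
    rw [Finset.sum_eq_single i]
    · simp
    · intro j _ hj
      rw [if_neg]
      intro h
      exact hj (hxinj h.symm)
    · simp
  have hgfmeas : Measurable gf := by
    apply Finset.measurable_sum
    intro i _
    exact Measurable.ite (by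
      have : {y : EuclideanSpace ℝ (Fin d) | y = x i} = {x i} := by
        ext y; simp
      rw [this]; exact measurableSet_singleton _) measurable_const measurable_const
  -- the discrete kernel function
  have hrpm : Measurable fun t : ℝ => |t| ^ p :=
    ((Real.continuous_rpow_const (by linarith)).measurable).comp measurable_abs
  set K : EuclideanSpace ℝ (Fin d) → EuclideanSpace ℝ (Fin d) → ℝ :=
    fun u v => (if ‖u - v‖ ≤ b * ε then a else 0) * |gf u - gf v| ^ p with hK
  have hKm1 : ∀ u, Measurable fun v => ENNReal.ofReal (K u v) := by
    intro u
    apply Measurable.ennreal_ofReal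
    apply Measurable.mul
    · exact Measurable.ite
        (measurableSet_le ((continuous_const.sub continuous_id).norm).measurable
          measurable_const) measurable_const measurable_const
    · exact hrpm.comp (measurable_const.sub hgfmeas)
  have hKm2 : ∀ v, Measurable fun u => ENNReal.ofReal (K u v) := by
    intro v
    apply Measurable.ennreal_ofReal
    apply Measurable.mul
    · exact Measurable.ite
        (measurableSet_le ((continuous_id.sub continuous_const).norm).measurable
          measurable_const) measurable_const measurable_const
    · exact hrpm.comp (hgfmeas.sub measurable_const)
  -- integration against the empirical measure
  have hemp : ∀ h : EuclideanSpace ℝ (Fin d) → ℝ≥0∞,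
      ∫⁻ v, h v ∂(empiricalMeasure d n x) = (n : ℝ≥0∞)⁻¹ * ∑ i, h (x i) := by
    intro h
    rw [empiricalMeasure, lintegral_smul_measure, lintegral_finset_sum_measure]
    simp [lintegral_dirac]
  -- comparison of volume with μ
  set r : ℝ≥0∞ := ENNReal.ofReal ρmin with hr
  have hr0 : r ≠ 0 := (ENNReal.ofReal_pos.mpr hρmin).ne'
  have hrtop : r ≠ ⊤ := ENNReal.ofReal_ne_top
  have hμge : r • (volume.restrict Ω) ≤ μ := by
    rw [hμ, ← withDensity_const]
    exact withDensity_mono (hρ.mono fun w hw => ENNReal.ofReal_le_ofReal hw)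
  have hkey : ∀ h : EuclideanSpace ℝ (Fin d) → ℝ≥0∞,
      ∫⁻ w in Ω, h w ≤ r⁻¹ * ∫⁻ w, h w ∂μ := by
    intro h
    have h1 : r * ∫⁻ w in Ω, h w = ∫⁻ w, h w ∂(r • volume.restrict Ω) :=
      (lintegral_smul_measure r h).symm
    have h2 : ∫⁻ w, h w ∂(r • volume.restrict Ω) ≤ ∫⁻ w, h w ∂μ :=
      lintegral_mono' hμge le_rfl
    calc ∫⁻ w in Ω, h w = r⁻¹ * (r * ∫⁻ w in Ω, h w) := by
          rw [← mul_assoc, ENNReal.inv_mul_cancel hr0 hrtop, one_mul]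
      _ ≤ r⁻¹ * ∫⁻ w, h w ∂μ := mul_le_mul_right (h1 ▸ h2) _
  -- the continuum integrand
  set Gr : EuclideanSpace ℝ (Fin d) → EuclideanSpace ℝ (Fin d) → ℝ :=
    fun w z => (if ‖w - z‖ < b * εt then a else 0) * |F w - F z| ^ p with hGr
  have hGrnn : ∀ w z, 0 ≤ Gr w z := by
    intro w z
    apply mul_nonneg
    · split_ifs
      · exact ha.le
      · exact le_rfl
    · positivity
  -- pointwise comparison
  have hpt : ∀ w z, ‖T w - w‖ ≤ s → (∃ i, T w = x i ∧ F w = f i) →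
      ‖T z - z‖ ≤ s → (∃ i, T z = x i ∧ F z = f i) →
      ENNReal.ofReal (Gr w z) ≤ ENNReal.ofReal (K (T w) (T z)) := by
    rintro w z hw ⟨i, hwi, hFi⟩ hz ⟨j, hzj, hFj⟩
    by_cases hlt : ‖w - z‖ < b * εt
    · apply ENNReal.ofReal_le_ofReal
      have hTle : ‖T w - T z‖ ≤ b * ε := by
        have h3 : T w - T z = (T w - w) + (w - z) + (z - T z) := by abel
        have h4 : ‖T w - T z‖ ≤ ‖T w - w‖ + ‖w - z‖ + ‖z - T z‖ := by
          rw [h3]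
          exact le_trans (norm_add_le _ _) (by gcongr; exact norm_add_le _ _)
        have h5 : ‖z - T z‖ ≤ s := by rw [norm_sub_rev]; exact hz
        linarith
      rw [hwi, hzj] at hTle
      rw [hGr, hK]
      simp only [if_pos hlt, hwi, hzj, hgfx, hFi, hFj, if_pos hTle]
      exact le_rfl
    · rw [hGr]
      simp only [if_neg hlt, zero_mul, ENNReal.ofReal_zero]
      exact zero_le
  -- the discrete sum
  set S : ℝ≥0∞ := ∑ i, ∑ j, ENNReal.ofReal (η (‖x i - x j‖ / ε) * |f i - f j| ^ p) with hS
  set Bound : ℝ≥0∞ := r⁻¹ * (r⁻¹ * ((n:ℝ≥0∞)⁻¹ * ((n:ℝ≥0∞)⁻¹ * S))) with hBound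
  have hgood : ∀ᵐ w ∂μ, ‖T w - w‖ ≤ s ∧ ∃ i, T w = x i ∧ F w = f i := hclose.and hFf
  -- main chain of inequalities in ℝ≥0∞
  have hchain : ∫⁻ w in Ω, ∫⁻ z in Ω, ENNReal.ofReal (Gr w z) ≤ Bound := by
    have step4 : ∫⁻ w, ∫⁻ z, ENNReal.ofReal (Gr w z) ∂μ ∂μ ≤
        ∫⁻ w, ∫⁻ z, ENNReal.ofReal (K (T w) (T z)) ∂μ ∂μ := by
      apply lintegral_mono_ae
      filter_upwards [hgood] with w hw
      apply lintegral_mono_ae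
      filter_upwards [hgood] with z hz
      exact hpt w z hw.1 hw.2 hz.1 hz.2
    have step5 : ∫⁻ w, ∫⁻ z, ENNReal.ofReal (K (T w) (T z)) ∂μ ∂μ =
        (n:ℝ≥0∞)⁻¹ * ∑ j, ((n:ℝ≥0∞)⁻¹ * ∑ i, ENNReal.ofReal (K (x i) (x j))) := by
      have hinner : ∀ w, ∫⁻ z, ENNReal.ofReal (K (T w) (T z)) ∂μ =
          (n:ℝ≥0∞)⁻¹ * ∑ j, ENNReal.ofReal (K (T w) (x j)) := by
        intro w
        rw [← lintegral_map (hKm1 (T w)) hT, hpush, hemp]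
      simp_rw [hinner]
      rw [lintegral_const_mul' _ _ hnE]
      congr 1
      have hKcomp : ∀ j : Fin n, Measurable fun w => ENNReal.ofReal (K (T w) (x j)) :=
        fun j => (hKm2 (x j)).comp hT
      rw [lintegral_finset_sum _ (fun j _ => hKcomp j)]
      apply Finset.sum_congr rfl
      intro j _
      rw [← lintegral_map (hKm2 (x j)) hT, hpush, hemp]
    have step6 : (n:ℝ≥0∞)⁻¹ * ∑ j, ((n:ℝ≥0∞)⁻¹ * ∑ i, ENNReal.ofReal (K (x i) (x j))) ≤
        (n:ℝ≥0∞)⁻¹ * ((n:ℝ≥0∞)⁻¹ * S) := by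
      rw [← Finset.mul_sum, ← Finset.sum_comm]
      apply mul_le_mul_right
      apply mul_le_mul_right
      rw [hS]
      apply Finset.sum_le_sum
      intro i _
      apply Finset.sum_le_sum
      intro j _
      apply ENNReal.ofReal_le_ofReal
      rw [hK]
      simp only
      by_cases hc : ‖x i - x j‖ ≤ b * ε
      · rw [if_pos hc, hgfx i, hgfx j]
        apply mul_le_mul_of_nonneg_right _ (by positivity)
        apply hηa
        constructor
        · positivity
        · rw [div_le_iff₀ hε]; linarith
      · rw [if_neg hc, zero_mul]
        apply mul_nonneg (hηnonneg _ (by positivity)) (by positivity)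
    calc ∫⁻ w in Ω, ∫⁻ z in Ω, ENNReal.ofReal (Gr w z)
        ≤ ∫⁻ w in Ω, r⁻¹ * ∫⁻ z, ENNReal.ofReal (Gr w z) ∂μ :=
          lintegral_mono fun w => hkey _
      _ = r⁻¹ * ∫⁻ w in Ω, ∫⁻ z, ENNReal.ofReal (Gr w z) ∂μ :=
          lintegral_const_mul' _ _ (ENNReal.inv_ne_top.mpr hr0)
      _ ≤ r⁻¹ * (r⁻¹ * ∫⁻ w, ∫⁻ z, ENNReal.ofReal (Gr w z) ∂μ ∂μ) :=
          mul_le_mul_right (hkey _) _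
      _ ≤ r⁻¹ * (r⁻¹ * ((n:ℝ≥0∞)⁻¹ * ∑ j, ((n:ℝ≥0∞)⁻¹ *
            ∑ i, ENNReal.ofReal (K (x i) (x j))))) := by
          apply mul_le_mul_right
          apply mul_le_mul_right
          rw [← step5]
          exact step4
      _ ≤ Bound := by
          rw [hBound]
          exact mul_le_mul_right (mul_le_mul_right step6 _) _
  -- finiteness of the bound
  have hStop : S ≠ ⊤ := by
    rw [hS]
    apply LT.lt.ne
    apply ENNReal.sum_lt_top.mpr
    intro i _
    apply ENNReal.sum_lt_top.mpr
    intro j _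
    exact ENNReal.ofReal_lt_top
  have hBne : Bound ≠ ⊤ := by
    rw [hBound]
    apply ENNReal.mul_ne_top (ENNReal.inv_ne_top.mpr hr0)
    apply ENNReal.mul_ne_top (ENNReal.inv_ne_top.mpr hr0)
    apply ENNReal.mul_ne_top hnE
    exact ENNReal.mul_ne_top hnE hStop
  -- measurability of the integrand
  have hGrmeasR : Measurable (Function.uncurry Gr) := by
    apply Measurable.mul
    · exact Measurable.ite
        (measurableSet_lt ((continuous_fst.sub continuous_snd).norm).measurable
          measurable_const) measurable_const measurable_const
    · exact hrpm.comp ((hF.comp measurable_fst).sub (hF.comp measurable_snd))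
  have hGrmeas : Measurable (Function.uncurry fun w z => ENNReal.ofReal (Gr w z)) :=
    hGrmeasR.ennreal_ofReal
  have hinnermeas : Measurable fun w => ∫⁻ z in Ω, ENNReal.ofReal (Gr w z) :=
    hGrmeas.lintegral_prod_right'
  have hinner_eq : ∀ w, ∫ z in Ω, Gr w z = (∫⁻ z in Ω, ENNReal.ofReal (Gr w z)).toReal := by
    intro w
    apply integral_eq_lintegral_of_nonneg_ae
    · exact Filter.Eventually.of_forall fun z => hGrnn w z
    · exact (hGrmeasR.comp (measurable_prodMk_left)).aestronglyMeasurable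
  have houter_eq : ∫ w in Ω, (∫ z in Ω, Gr w z) =
      (∫⁻ w in Ω, ENNReal.ofReal (∫ z in Ω, Gr w z)).toReal := by
    apply integral_eq_lintegral_of_nonneg_ae
    · exact Filter.Eventually.of_forall fun w => integral_nonneg fun z => hGrnn w z
    · have heq : (fun w => ∫ z in Ω, Gr w z) =
          fun w => (∫⁻ z in Ω, ENNReal.ofReal (Gr w z)).toReal := funext hinner_eq
      rw [heq]
      exact hinnermeas.ennreal_toReal.aestronglyMeasurable
  have hfin : ∫⁻ w in Ω, ENNReal.ofReal (∫ z in Ω, Gr w z) ≤ Bound := by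
    refine le_trans (lintegral_mono fun w => ?_) hchain
    rw [hinner_eq w]
    exact ENNReal.ofReal_toReal_le
  have hreal : ∫ w in Ω, (∫ z in Ω, Gr w z) ≤ Bound.toReal := by
    rw [houter_eq]
    exact ENNReal.toReal_mono hBne hfin
  -- compute Bound.toReal
  have hStoReal : S.toReal = ∑ i, ∑ j, η (‖x i - x j‖ / ε) * |f i - f j| ^ p := by
    rw [hS, ENNReal.toReal_sum (fun i _ => by
      exact (ENNReal.sum_lt_top.mpr fun j _ => ENNReal.ofReal_lt_top).ne)]
    apply Finset.sum_congr rfl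
    intro i _
    rw [ENNReal.toReal_sum (fun j _ => ENNReal.ofReal_ne_top)]
    apply Finset.sum_congr rfl
    intro j _
    exact ENNReal.toReal_ofReal
      (mul_nonneg (hηnonneg _ (by positivity)) (by positivity))
  have hBtoReal : Bound.toReal = ρmin⁻¹ * (ρmin⁻¹ * ((n:ℝ)⁻¹ * ((n:ℝ)⁻¹ *
      ∑ i, ∑ j, η (‖x i - x j‖ / ε) * |f i - f j| ^ p))) := by
    rw [hBound]
    simp only [ENNReal.toReal_mul, ENNReal.toReal_inv, hStoReal, ENNReal.toReal_natCast,
      hr, ENNReal.toReal_ofReal hρmin.le]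
  -- conclude
  have hfinal : εt ^ (-(p + (d:ℝ))) * ∫ w in Ω, (∫ z in Ω, Gr w z) ≤
      εt ^ (-(p + (d:ℝ))) * Bound.toReal := by
    apply mul_le_mul_of_nonneg_left hreal
    positivity
  refine le_trans hfinal (le_of_eq ?_)
  rw [hBtoReal, graphEnergy]
  have hA : (0:ℝ) < ε ^ (p + (d:ℝ)) := Real.rpow_pos_of_pos hε _
  have hB : (0:ℝ) < εt ^ (p + (d:ℝ)) := Real.rpow_pos_of_pos hεtpos _
  rw [Real.rpow_neg hεtnn, Real.div_rpow hε.le hεtnn]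
  field_simp
end

section
/- Let d ≥ 1, let Ω ⊆ ℝ^d be open, let ε > 0 and β > 0, and let η : [0,∞) → [0,∞) be measurable. Let J : ℝ^d → ℝ be continuously differentiable with support contained in the closed unit ball and with ‖∇J(w)‖ ≤ β · η(‖w‖) for all w ∈ ℝ^d. Let f : ℝ^d → ℝ be integrable and vanish outside Ω, and set g = J_ε ⋆ f. Then for every x ∈ Ω with B̄(x, ε) ⊆ Ω, g is differentiable at x and ‖∇g(x)‖ ≤ β · ε^{-(d+1)} · ∫_Ω η(‖x − z‖/ε) · |f(z) − f(x)| dz, where the right-hand side is interpreted as a Lebesgue integral in [0,∞]. -/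
open MeasureTheory Metric Set Function
open scoped ENNReal BigOperators Convolution

/-- The convolution `J_ε ⋆ f` of `f` with the rescaled kernel `J_ε(w) = ε^{−d} J(w/ε)`. -/
noncomputable def mollify (d : ℕ) (ε : ℝ) (J f : EuclideanSpace ℝ (Fin d) → ℝ) :
    EuclideanSpace ℝ (Fin d) → ℝ :=
  fun y => ∫ z, (ε ^ d)⁻¹ * J (ε⁻¹ • (y - z)) * f z

set_option maxHeartbeats 2000000 in
theorem stmt6 (d : ℕ) (hd : 1 ≤ d)
    (Ω : Set (EuclideanSpace ℝ (Fin d))) (hΩ : IsOpen Ω)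
    (ε β : ℝ) (hε : 0 < ε) (hβ : 0 < β)
    (η : ℝ → ℝ) (hη : Measurable η) (hηnonneg : ∀ t, 0 ≤ t → 0 ≤ η t)
    (J : EuclideanSpace ℝ (Fin d) → ℝ) (hJ : ContDiff ℝ 1 J)
    (hJsupp : Function.support J ⊆ closedBall 0 1)
    (hJgrad : ∀ w, ‖fderiv ℝ J w‖ ≤ β * η ‖w‖)
    (f : EuclideanSpace ℝ (Fin d) → ℝ) (hf : Integrable f) (hf0 : ∀ x ∉ Ω, f x = 0)
    (g : EuclideanSpace ℝ (Fin d) → ℝ) (hg : g = mollify d ε J f)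
    (x : EuclideanSpace ℝ (Fin d)) (hx : x ∈ Ω) (hxball : closedBall x ε ⊆ Ω) :
    DifferentiableAt ℝ g x ∧
      ENNReal.ofReal ‖fderiv ℝ g x‖ ≤
        ENNReal.ofReal (β * ε ^ (-((d : ℝ) + 1))) *
          ∫⁻ z in Ω, ENNReal.ofReal (η (‖x - z‖ / ε) * |f z - f x|) := by
  classical
  have hεinv : (0:ℝ) < ε⁻¹ := inv_pos.2 hε
  have hεd : (0:ℝ) < (ε ^ d)⁻¹ := inv_pos.2 (pow_pos hε d)
  -- rescaled kernel
  set Jε : EuclideanSpace ℝ (Fin d) → ℝ := fun w => (ε ^ d)⁻¹ * J (ε⁻¹ • w) with hJε_def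
  set L : EuclideanSpace ℝ (Fin d) →L[ℝ] EuclideanSpace ℝ (Fin d) := ε⁻¹ • ContinuousLinearMap.id ℝ (EuclideanSpace ℝ (Fin d)) with hL_def
  have hLapp : ∀ w : EuclideanSpace ℝ (Fin d), L w = ε⁻¹ • w := fun w => rfl
  have hJεc : ContDiff ℝ 1 Jε := by
    have h1 : ContDiff ℝ 1 fun w : EuclideanSpace ℝ (Fin d) => J (ε⁻¹ • w) :=
      hJ.comp (contDiff_id.const_smul ε⁻¹)
    exact contDiff_const.mul h1
  -- derivative of the rescaled kernel
  have hfJε : ∀ w : EuclideanSpace ℝ (Fin d), fderiv ℝ Jε w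
      = (ε ^ d)⁻¹ • ((fderiv ℝ J (ε⁻¹ • w)).comp L) := by
    intro w
    have hLd : HasFDerivAt (fun w : EuclideanSpace ℝ (Fin d) => ε⁻¹ • w) L w := by
      have := L.hasFDerivAt (x := w)
      exact this
    have h1 : HasFDerivAt (fun w : EuclideanSpace ℝ (Fin d) => J (ε⁻¹ • w))
        ((fderiv ℝ J (ε⁻¹ • w)).comp L) w :=
      ((hJ.differentiable one_ne_zero (ε⁻¹ • w)).hasFDerivAt).comp w hLd
    have h2 := h1.const_mul ((ε ^ d)⁻¹)
    exact h2.fderiv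
  have hnormsm : ∀ w : EuclideanSpace ℝ (Fin d), ‖ε⁻¹ • w‖ = ‖w‖ / ε := by
    intro w
    rw [norm_smul, Real.norm_eq_abs, abs_of_pos hεinv, div_eq_inv_mul]
  -- norm bound for the derivative of the rescaled kernel
  have hTnorm : ∀ w : EuclideanSpace ℝ (Fin d), ‖fderiv ℝ Jε w‖ ≤ (ε ^ d)⁻¹ * ε⁻¹ * (β * η (‖w‖ / ε)) := by
    intro w
    rw [hfJε w, norm_smul, Real.norm_eq_abs, abs_of_pos hεd]
    have hL1 : ‖L‖ ≤ ε⁻¹ := by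
      refine ContinuousLinearMap.opNorm_le_bound _ hεinv.le fun v => ?_
      rw [hLapp, norm_smul, Real.norm_eq_abs, abs_of_pos hεinv]
    have h2 : ‖(fderiv ℝ J (ε⁻¹ • w)).comp L‖ ≤ (β * η (‖w‖ / ε)) * ε⁻¹ := by
      refine (ContinuousLinearMap.opNorm_comp_le _ _).trans ?_
      have h3 := hJgrad (ε⁻¹ • w)
      rw [hnormsm w] at h3
      have hb : (0:ℝ) ≤ β * η (‖w‖ / ε) := le_trans (norm_nonneg _) h3
      exact mul_le_mul h3 hL1 (norm_nonneg _) hb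
    calc (ε ^ d)⁻¹ * ‖(fderiv ℝ J (ε⁻¹ • w)).comp L‖
        ≤ (ε ^ d)⁻¹ * ((β * η (‖w‖ / ε)) * ε⁻¹) :=
          mul_le_mul_of_nonneg_left h2 hεd.le
      _ = (ε ^ d)⁻¹ * ε⁻¹ * (β * η (‖w‖ / ε)) := by ring
  -- support of the rescaled kernel
  have hJεsupp : support Jε ⊆ closedBall 0 ε := by
    intro w hw
    have hJw : J (ε⁻¹ • w) ≠ 0 := by
      intro h; exact hw (by simp [hJε_def, h])
    have := hJsupp hJw
    rw [mem_closedBall_zero_iff] at this ⊢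
    rw [hnormsm w] at this
    calc ‖w‖ = ε * (‖w‖ / ε) := by field_simp
      _ ≤ ε * 1 := mul_le_mul_of_nonneg_left this hε.le
      _ = ε := mul_one ε
  have hJεHCS : HasCompactSupport Jε :=
    HasCompactSupport.intro (isCompact_closedBall (0:EuclideanSpace ℝ (Fin d)) ε)
      (fun w hw => by
        by_contra h
        exact hw (hJεsupp h))
  have hT'cont : Continuous (fderiv ℝ Jε) := hJεc.continuous_fderiv one_ne_zero
  have hT'HCS : HasCompactSupport (fderiv ℝ Jε) := HasCompactSupport.fderiv (𝕜 := ℝ) hJεHCS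
  have hT'supp : support (fderiv ℝ Jε) ⊆ closedBall 0 ε :=
    (support_fderiv_subset ℝ).trans (closure_minimal hJεsupp isClosed_closedBall)
  have hT'int : Integrable (fderiv ℝ Jε) :=
    hT'cont.integrable_of_hasCompactSupport hT'HCS
  have hJεint : Integrable Jε :=
    hJεc.continuous.integrable_of_hasCompactSupport hJεHCS
  -- the convolution representation
  have hgconv : g = f ⋆[ContinuousLinearMap.mul ℝ ℝ, volume] Jε := by
    rw [hg]; funext y
    simp only [mollify, convolution_def, ContinuousLinearMap.mul_apply']
    congr 1; funext z
    simp only [hJε_def]; ring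
  have hderiv := hJεHCS.hasFDerivAt_convolution_right
    (ContinuousLinearMap.mul ℝ ℝ) hf.locallyIntegrable hJεc x
  have hdiff : DifferentiableAt ℝ g x := by
    rw [hgconv]; exact hderiv.differentiableAt
  -- the translated kernel derivative
  set T : EuclideanSpace ℝ (Fin d) → (EuclideanSpace ℝ (Fin d) →L[ℝ] ℝ) := fun t => fderiv ℝ Jε (x - t) with hT_def
  have hTcont : Continuous T := hT'cont.comp (continuous_const.sub continuous_id)
  have hTsupp : support T ⊆ closedBall x ε := by
    intro t ht
    have : x - t ∈ support (fderiv ℝ Jε) := ht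
    have h2 := hT'supp this
    rw [mem_closedBall_zero_iff] at h2
    rw [mem_closedBall, dist_eq_norm, ← norm_neg]
    simpa [neg_sub] using h2
  have hTHCS : HasCompactSupport T :=
    HasCompactSupport.intro (isCompact_closedBall x ε)
      (fun t ht => by by_contra h; exact ht (hTsupp h))
  have hTint : Integrable T := hTcont.integrable_of_hasCompactSupport hTHCS
  obtain ⟨M, hM⟩ := hTHCS.exists_bound_of_continuous hTcont
  -- integrability facts
  have hfT : Integrable (fun t => f t • T t) := by
    refine Integrable.mono' (hf.norm.const_mul M)
      (hf.aestronglyMeasurable.smul hTcont.aestronglyMeasurable)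
      (ae_of_all _ fun t => ?_)
    show ‖f t • T t‖ ≤ M * ‖f t‖
    rw [norm_smul (f t) (T t)]
    calc ‖f t‖ * ‖T t‖ ≤ ‖f t‖ * M := mul_le_mul_of_nonneg_left (hM t) (norm_nonneg _)
      _ = M * ‖f t‖ := mul_comm _ _
  have hsub : Integrable (fun t => (f t - f x) • T t) := by
    have heq : (fun t => (f t - f x) • T t) = fun t => f t • T t - f x • T t := by
      funext t; exact sub_smul (f t) (f x) (T t)
    rw [heq]; exact hfT.sub (hTint.smul (f x))
  -- the integral of the derivative of the kernel vanishes
  have hzero : (∫ w, fderiv ℝ Jε w) = 0 := by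
    refine ContinuousLinearMap.ext fun v => ?_
    rw [ContinuousLinearMap.integral_apply hT'int]
    have h1 : Integrable (fun w : EuclideanSpace ℝ (Fin d) => fderiv ℝ (fun _ : EuclideanSpace ℝ (Fin d) => (1:ℝ)) w v * Jε w) := by
      have : (fun w : EuclideanSpace ℝ (Fin d) => fderiv ℝ (fun _ : EuclideanSpace ℝ (Fin d) => (1:ℝ)) w v * Jε w) = fun _ => 0 := by
        funext w; simp [fderiv_const]
      rw [this]; exact integrable_zero _ _ _
    have h2 : Integrable (fun w : EuclideanSpace ℝ (Fin d) => (1:ℝ) * fderiv ℝ Jε w v) := by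
      simpa using hT'int.apply_continuousLinearMap v
    have h3 : Integrable (fun w : EuclideanSpace ℝ (Fin d) => (1:ℝ) * Jε w) := by simpa using hJεint
    have := integral_mul_fderiv_eq_neg_fderiv_mul_of_integrable (μ := (volume : Measure (EuclideanSpace ℝ (Fin d))))
      (f := fun _ : EuclideanSpace ℝ (Fin d) => (1:ℝ)) (g := Jε) (v := v) h1 h2 h3
      (fun y _ => (differentiable_const (1:ℝ)) y) (fun y _ => (hJεc.differentiable one_ne_zero) y)
    simpa [fderiv_const] using this
  have hTzero : (∫ t, T t) = 0 := by
    have := integral_sub_left_eq_self (fderiv ℝ Jε) (volume : Measure (EuclideanSpace ℝ (Fin d))) x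
    rw [hT_def]
    rw [this, hzero]
  -- identify the derivative
  have hDF : (f ⋆[(ContinuousLinearMap.mul ℝ ℝ).precompR (EuclideanSpace ℝ (Fin d)), volume] fderiv ℝ Jε) x
      = ∫ t, (f t - f x) • T t := by
    refine ContinuousLinearMap.ext fun v => ?_
    rw [convolution_precompR_apply (ContinuousLinearMap.mul ℝ ℝ) hf.locallyIntegrable
      hT'HCS hT'cont x v]
    rw [ContinuousLinearMap.integral_apply hsub]
    rw [convolution_def]
    simp only [ContinuousLinearMap.mul_apply', ContinuousLinearMap.coe_smul',
      Pi.smul_apply, smul_eq_mul]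
    have hu : Integrable (fun t => T t v) := hTint.apply_continuousLinearMap v
    have huz : (∫ t, T t v) = 0 := by
      rw [← ContinuousLinearMap.integral_apply hTint, hTzero]; rfl
    have hfu : Integrable (fun t => f t * T t v) := by
      have := hfT.apply_continuousLinearMap v
      simpa [smul_eq_mul] using this
    have hsu : Integrable (fun t => (f t - f x) * T t v) := by
      have := hsub.apply_continuousLinearMap v
      simpa [smul_eq_mul] using this
    calc (∫ t, f t * T t v)
        = ∫ t, ((f t - f x) * T t v + f x * T t v) := by
          congr 1; funext t; ring
      _ = (∫ t, (f t - f x) * T t v) + ∫ t, f x * T t v :=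
          integral_add hsu (hu.const_mul (f x))
      _ = (∫ t, (f t - f x) * T t v) + f x * ∫ t, T t v := by
          rw [integral_const_mul]
      _ = ∫ t, (f t - f x) * T t v := by rw [huz]; ring
  have hF : fderiv ℝ g x = ∫ t, (f t - f x) • T t := by
    rw [hgconv, hderiv.fderiv, hDF]
  refine ⟨hdiff, ?_⟩
  -- the constant
  set c : ℝ := β * ((ε ^ d)⁻¹ * ε⁻¹) with hc_def
  have hc_nonneg : 0 ≤ c := by positivity
  have hc_eq : β * ε ^ (-((d : ℝ) + 1)) = c := by
    have h1 : -((d : ℝ) + 1) = -(((d + 1 : ℕ) : ℝ)) := by push_cast; ring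
    rw [hc_def, h1, Real.rpow_neg hε.le, Real.rpow_natCast, pow_succ, mul_inv]
  -- pointwise bound
  have hpt : ∀ t : EuclideanSpace ℝ (Fin d), ‖(f t - f x) • T t‖ ≤ c * (η (‖x - t‖ / ε) * |f t - f x|) := by
    intro t
    show ‖(f t - f x) • T t‖ ≤ _
    rw [norm_smul (f t - f x) (T t), Real.norm_eq_abs]
    have h1 : ‖T t‖ ≤ (ε ^ d)⁻¹ * ε⁻¹ * (β * η (‖x - t‖ / ε)) := hTnorm (x - t)
    calc |f t - f x| * ‖T t‖
        ≤ |f t - f x| * ((ε ^ d)⁻¹ * ε⁻¹ * (β * η (‖x - t‖ / ε))) :=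
          mul_le_mul_of_nonneg_left h1 (abs_nonneg _)
      _ = c * (η (‖x - t‖ / ε) * |f t - f x|) := by rw [hc_def]; ring
  rw [hF, hc_eq]
  calc ENNReal.ofReal ‖∫ t, (f t - f x) • T t‖
      ≤ ∫⁻ t, ENNReal.ofReal ‖(f t - f x) • T t‖ := by
        refine le_trans (ENNReal.ofReal_le_ofReal (norm_integral_le_lintegral_norm _))
          ENNReal.ofReal_toReal_le
    _ = ∫⁻ t in Ω, ENNReal.ofReal ‖(f t - f x) • T t‖ := by
        refine (setLIntegral_eq_of_support_subset ?_).symm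
        intro t ht
        have h1 : (f t - f x) • T t ≠ 0 := by
          intro h
          apply ht
          show ENNReal.ofReal ‖(f t - f x) • T t‖ = 0
          rw [h, norm_zero, ENNReal.ofReal_zero]
        have h2 : T t ≠ 0 := fun h => h1 (by rw [h, smul_zero])
        exact hxball (hTsupp h2)
    _ ≤ ∫⁻ t in Ω, ENNReal.ofReal c * ENNReal.ofReal (η (‖x - t‖ / ε) * |f t - f x|) := by
        refine lintegral_mono fun t => ?_
        rw [← ENNReal.ofReal_mul hc_nonneg]
        exact ENNReal.ofReal_le_ofReal (hpt t)
    _ = ENNReal.ofReal c * ∫⁻ t in Ω, ENNReal.ofReal (η (‖x - t‖ / ε) * |f t - f x|) :=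
        lintegral_const_mul' _ _ ENNReal.ofReal_ne_top
end

section
/- Let d ≥ 1 and let η : [0,∞) → [0,∞) be nonincreasing and measurable; define η̃ : [0,∞) → [0,∞) by η̃(t) = η(0) for t ∈ [0,1] and η̃(t) = η(t) for t > 1. Let Ω ⊆ ℝ^d be a Borel set, μ a probability measure on Ω, n ≥ 1, x : Fin n → ℝ^d with empirical measure μ_n, ε > 0, and let T : Ω → ℝ^d be Borel measurable with pushforward μ ∘ T⁻¹ = μ_n and ‖T(w) − w‖ ≤ ε for μ-a.e. w. Then for every y ∈ ℝ^d, (1/n) Σ_{j ∈ Fin n} η(‖y − x j‖/ε) ≤ ∫_Ω η̃(‖y − z‖/(2ε)) dμ(z). If moreover μ has density ρ ≤ ρ_max with respect to Lebesgue measure, then ε^{-d} · (1/n) Σ_{j ∈ Fin n} η(‖y − x j‖/ε) ≤ 2^d · ρ_max · ∫_{ℝ^d} η̃(‖w‖) dw. -/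
open MeasureTheory Metric Set
open scoped ENNReal BigOperators

theorem stmt8 (d n : ℕ) (hd : 1 ≤ d) (hn : 1 ≤ n)
    (η : ℝ → ℝ) (hη : Measurable η) (hηnonneg : ∀ t, 0 ≤ t → 0 ≤ η t)
    (hηmono : AntitoneOn η (Set.Ici 0))
    (ηt : ℝ → ℝ) (hηt : ηt = fun t => if t ≤ 1 then η 0 else η t)
    (Ω : Set (EuclideanSpace ℝ (Fin d))) (hΩ : MeasurableSet Ω)
    (μ : Measure (EuclideanSpace ℝ (Fin d))) (hprob : IsProbabilityMeasure μ)
    (hμΩ : μ Ωᶜ = 0)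
    (x : Fin n → EuclideanSpace ℝ (Fin d)) (ε : ℝ) (hε : 0 < ε)
    (T : EuclideanSpace ℝ (Fin d) → EuclideanSpace ℝ (Fin d)) (hT : Measurable T)
    (hpush : μ.map T = empiricalMeasure d n x)
    (hclose : ∀ᵐ w ∂μ, ‖T w - w‖ ≤ ε) :
    (∀ y : EuclideanSpace ℝ (Fin d),
        (1 / (n : ℝ)) * ∑ j, η (‖y - x j‖ / ε) ≤ ∫ z in Ω, ηt (‖y - z‖ / (2 * ε)) ∂μ) ∧
    (∀ (ρ : EuclideanSpace ℝ (Fin d) → ℝ) (ρmax : ℝ),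
        μ = (volume.restrict Ω).withDensity (fun w => ENNReal.ofReal (ρ w)) →
        (∀ᵐ w ∂(volume.restrict Ω), ρ w ≤ ρmax) →
        ∀ y : EuclideanSpace ℝ (Fin d),
          ENNReal.ofReal (ε ^ (-(d : ℝ)) * ((1 / (n : ℝ)) * ∑ j, η (‖y - x j‖ / ε))) ≤
            ENNReal.ofReal (2 ^ d * ρmax) *
              ∫⁻ w : EuclideanSpace ℝ (Fin d), ENNReal.ofReal (ηt ‖w‖)) := by
  have hnR : (0 : ℝ) < n := by exact_mod_cast hn
  -- basic facts about η and ηt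
  have hη0 : ∀ s : ℝ, 0 ≤ s → η s ≤ η 0 := fun s hs =>
    hηmono (self_mem_Ici) hs hs
  have hηt_meas : Measurable ηt := by
    rw [hηt]
    exact Measurable.ite (measurableSet_le measurable_id measurable_const)
      measurable_const hη
  have hηt_le : ∀ s : ℝ, 0 ≤ s → ηt s ≤ η 0 := by
    intro s hs; rw [hηt]; dsimp only
    split_ifs with h
    · exact le_rfl
    · exact hη0 s hs
  have hηt_nonneg : ∀ s : ℝ, 0 ≤ s → 0 ≤ ηt s := by
    intro s hs; rw [hηt]; dsimp only
    split_ifs with h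
    · exact hηnonneg 0 le_rfl
    · exact hηnonneg s hs
  have μrestrict : μ.restrict Ω = μ := by
    apply Measure.restrict_eq_self_of_ae_mem
    rw [ae_iff]
    exact hμΩ
  -- part 1
  have part1 : ∀ y : EuclideanSpace ℝ (Fin d),
      (1 / (n : ℝ)) * ∑ j, η (‖y - x j‖ / ε) ≤
        ∫ z, ηt (‖y - z‖ / (2 * ε)) ∂μ := by
    intro y
    set f : EuclideanSpace ℝ (Fin d) → ℝ := fun z => η (‖y - z‖ / ε) with hf_def
    set g : EuclideanSpace ℝ (Fin d) → ℝ := fun z => ηt (‖y - z‖ / (2 * ε)) with hg_def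
    have hf_meas : Measurable f :=
      hη.comp ((measurable_const.sub measurable_id).norm.div_const ε)
    have hg_meas : Measurable g :=
      hηt_meas.comp ((measurable_const.sub measurable_id).norm.div_const (2 * ε))
    have hf_int : ∀ (ν : Measure (EuclideanSpace ℝ (Fin d))) [IsFiniteMeasure ν],
        Integrable f ν := by
      intro ν _
      refine (integrable_const (η 0)).mono' hf_meas.aestronglyMeasurable ?_
      refine Filter.Eventually.of_forall fun z => ?_
      have h1 : 0 ≤ ‖y - z‖ / ε := div_nonneg (norm_nonneg _) hε.le
      rw [Real.norm_eq_abs, abs_of_nonneg (hηnonneg _ h1)]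
      exact hη0 _ h1
    have hg_int : Integrable g μ := by
      refine (integrable_const (η 0)).mono' hg_meas.aestronglyMeasurable ?_
      refine Filter.Eventually.of_forall fun z => ?_
      have h1 : 0 ≤ ‖y - z‖ / (2 * ε) := div_nonneg (norm_nonneg _) (by positivity)
      rw [Real.norm_eq_abs, abs_of_nonneg (hηt_nonneg _ h1)]
      exact hηt_le _ h1
    -- sum = integral against empirical measure
    have hsum : (1 / (n : ℝ)) * ∑ j, η (‖y - x j‖ / ε) =
        ∫ z, f z ∂(empiricalMeasure d n x) := by
      rw [empiricalMeasure, integral_smul_measure,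
        integral_finset_sum_measure (fun i _ => hf_int _)]
      simp [integral_dirac, one_div, hf_def]
    have hmap : ∫ z, f z ∂(empiricalMeasure d n x) = ∫ w, f (T w) ∂μ := by
      rw [← hpush, integral_map hT.aemeasurable hf_meas.aestronglyMeasurable]
    have hptwise : ∀ᵐ w ∂μ, f (T w) ≤ g w := by
      filter_upwards [hclose] with w hw
      have hb : ‖y - w‖ ≤ ‖y - T w‖ + ε := by
        calc ‖y - w‖ = ‖(y - T w) + (T w - w)‖ := by rw [sub_add_sub_cancel]
          _ ≤ ‖y - T w‖ + ‖T w - w‖ := norm_add_le _ _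
          _ ≤ ‖y - T w‖ + ε := by linarith
      have ha : 0 ≤ ‖y - T w‖ / ε := div_nonneg (norm_nonneg _) hε.le
      simp only [hf_def, hg_def, hηt]
      split_ifs with h
      · exact hη0 _ ha
      · push_neg at h
        have hb2 : 2 * ε < ‖y - w‖ := by
          rw [lt_div_iff₀ (by positivity)] at h
          linarith
        have hle : ‖y - w‖ / (2 * ε) ≤ ‖y - T w‖ / ε := by
          rw [div_le_div_iff₀ (by positivity) hε]
          nlinarith [norm_nonneg (y - T w)]
        exact hηmono (mem_Ici.mpr (by positivity)) (mem_Ici.mpr ha) hle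
    have hmono : ∫ w, f (T w) ∂μ ≤ ∫ w, g w ∂μ :=
      integral_mono_of_nonneg
        (Filter.Eventually.of_forall fun w =>
          hηnonneg _ (div_nonneg (norm_nonneg _) hε.le))
        hg_int hptwise
    calc (1 / (n : ℝ)) * ∑ j, η (‖y - x j‖ / ε)
        = ∫ w, f (T w) ∂μ := by rw [hsum, hmap]
      _ ≤ ∫ w, g w ∂μ := hmono
  refine ⟨fun y => by rw [← μrestrict] at *; simpa [μrestrict] using part1 y, ?_⟩
  -- part 2
  intro ρ ρmax hμρ hρmax y
  set c : ℝ := 2 * ε with hc_def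
  have hc : 0 < c := by positivity
  set g : EuclideanSpace ℝ (Fin d) → ℝ := fun z => ηt (‖y - z‖ / c) with hg_def
  have hg_meas : Measurable g :=
    hηt_meas.comp ((measurable_const.sub measurable_id).norm.div_const c)
  have hg_int : Integrable g μ := by
    refine (integrable_const (η 0)).mono' hg_meas.aestronglyMeasurable ?_
    refine Filter.Eventually.of_forall fun z => ?_
    have h1 : 0 ≤ ‖y - z‖ / c := div_nonneg (norm_nonneg _) hc.le
    rw [Real.norm_eq_abs, abs_of_nonneg (hηt_nonneg _ h1)]
    exact hηt_le _ h1
  have hg_nonneg : 0 ≤ᵐ[μ] g :=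
    Filter.Eventually.of_forall fun z =>
      hηt_nonneg _ (div_nonneg (norm_nonneg _) hc.le)
  set S : ℝ := (1 / (n : ℝ)) * ∑ j, η (‖y - x j‖ / ε) with hS_def
  have hS_nonneg : 0 ≤ S := by
    apply mul_nonneg (by positivity)
    exact Finset.sum_nonneg fun j _ =>
      hηnonneg _ (div_nonneg (norm_nonneg _) hε.le)
  have hS_le : S ≤ ∫ w, g w ∂μ := part1 y
  -- pass to lintegrals
  have h1 : ENNReal.ofReal S ≤ ∫⁻ w, ENNReal.ofReal (g w) ∂μ := by
    calc ENNReal.ofReal S ≤ ENNReal.ofReal (∫ w, g w ∂μ) := ENNReal.ofReal_le_ofReal hS_le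
      _ = ∫⁻ w, ENNReal.ofReal (g w) ∂μ := ofReal_integral_eq_lintegral_ofReal hg_int hg_nonneg
  -- replace density by its bound
  have hμ_le : μ ≤ (ENNReal.ofReal ρmax) • (volume.restrict Ω) := by
    rw [hμρ, ← withDensity_const]
    exact withDensity_mono (hρmax.mono fun w hw => ENNReal.ofReal_le_ofReal hw)
  have h2 : ∫⁻ w, ENNReal.ofReal (g w) ∂μ ≤
      ENNReal.ofReal ρmax * ∫⁻ w, ENNReal.ofReal (g w) := by
    calc ∫⁻ w, ENNReal.ofReal (g w) ∂μ
        ≤ ∫⁻ w, ENNReal.ofReal (g w) ∂((ENNReal.ofReal ρmax) • (volume.restrict Ω)) :=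
          lintegral_mono' hμ_le le_rfl
      _ = ENNReal.ofReal ρmax * ∫⁻ w, ENNReal.ofReal (g w) ∂(volume.restrict Ω) :=
          lintegral_smul_measure _ _
      _ ≤ ENNReal.ofReal ρmax * ∫⁻ w, ENNReal.ofReal (g w) :=
          mul_le_mul_right (lintegral_mono' Measure.restrict_le_self le_rfl) _
  -- change of variables
  have hrank : Module.finrank ℝ (EuclideanSpace ℝ (Fin d)) = d := finrank_euclideanSpace_fin
  have hF_meas : Measurable fun w : EuclideanSpace ℝ (Fin d) => ENNReal.ofReal (ηt ‖w‖) :=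
    ENNReal.measurable_ofReal.comp (hηt_meas.comp measurable_norm)
  have hsub : (∫⁻ w, ENNReal.ofReal (g w)) =
      ∫⁻ w : EuclideanSpace ℝ (Fin d), ENNReal.ofReal (ηt (‖w‖ / c)) := by
    have := (Measure.measurePreserving_sub_left
      (volume : Measure (EuclideanSpace ℝ (Fin d))) y).lintegral_comp
      (f := fun w => ENNReal.ofReal (ηt (‖w‖ / c)))
      (ENNReal.measurable_ofReal.comp (hηt_meas.comp (measurable_norm.div_const c)))
    simpa [hg_def] using this
  have hscale : (∫⁻ w : EuclideanSpace ℝ (Fin d), ENNReal.ofReal (ηt (‖w‖ / c))) =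
      ENNReal.ofReal (c ^ d) * ∫⁻ w : EuclideanSpace ℝ (Fin d), ENNReal.ofReal (ηt ‖w‖) := by
    have hcinv : (c⁻¹ : ℝ) ≠ 0 := by positivity
    have hmap := Measure.map_addHaar_smul (volume : Measure (EuclideanSpace ℝ (Fin d))) hcinv
    have hcomp : ∀ w : EuclideanSpace ℝ (Fin d),
        ENNReal.ofReal (ηt (‖w‖ / c)) = ENNReal.ofReal (ηt ‖c⁻¹ • w‖) := by
      intro w
      rw [norm_smul, Real.norm_eq_abs, abs_of_pos (by positivity : (0:ℝ) < c⁻¹),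
        inv_mul_eq_div]
    calc (∫⁻ w : EuclideanSpace ℝ (Fin d), ENNReal.ofReal (ηt (‖w‖ / c)))
        = ∫⁻ w : EuclideanSpace ℝ (Fin d), ENNReal.ofReal (ηt ‖c⁻¹ • w‖) := by
          simp_rw [hcomp]
      _ = ∫⁻ w, ENNReal.ofReal (ηt ‖w‖) ∂(Measure.map (c⁻¹ • ·) volume) := by
          rw [lintegral_map hF_meas (measurable_const_smul _)]
      _ = ENNReal.ofReal (c ^ d) * ∫⁻ w, ENNReal.ofReal (ηt ‖w‖) := by
          rw [hmap, lintegral_smul_measure, hrank, ← inv_pow, inv_inv,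
            abs_of_pos (by positivity : (0:ℝ) < c ^ d), smul_eq_mul]
  -- put everything together
  have hεd : ENNReal.ofReal (ε ^ (-(d : ℝ))) * ENNReal.ofReal (c ^ d) =
      ENNReal.ofReal ((2:ℝ) ^ d) := by
    rw [← ENNReal.ofReal_mul (by positivity)]
    congr 1
    rw [Real.rpow_neg hε.le, Real.rpow_natCast, hc_def, mul_pow]
    field_simp
  have key : ENNReal.ofReal (ε ^ (-(d : ℝ)) * S) ≤
      ENNReal.ofReal (ε ^ (-(d : ℝ))) * (ENNReal.ofReal ρmax *
        (ENNReal.ofReal (c ^ d) * ∫⁻ w : EuclideanSpace ℝ (Fin d), ENNReal.ofReal (ηt ‖w‖))) := by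
    rw [ENNReal.ofReal_mul (by positivity)]
    refine mul_le_mul_right ?_ _
    calc ENNReal.ofReal S ≤ ∫⁻ w, ENNReal.ofReal (g w) ∂μ := h1
      _ ≤ ENNReal.ofReal ρmax * ∫⁻ w, ENNReal.ofReal (g w) := h2
      _ = ENNReal.ofReal ρmax *
          (ENNReal.ofReal (c ^ d) * ∫⁻ w : EuclideanSpace ℝ (Fin d), ENNReal.ofReal (ηt ‖w‖)) := by
            rw [hsub, hscale]
  calc ENNReal.ofReal (ε ^ (-(d : ℝ)) * S) ≤ _ := key
    _ = ENNReal.ofReal (2 ^ d * ρmax) * ∫⁻ w : EuclideanSpace ℝ (Fin d), ENNReal.ofReal (ηt ‖w‖) := by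
        rw [ENNReal.ofReal_mul (by positivity : (0:ℝ) ≤ 2 ^ d), ← hεd]
        ring
end

section
/- Let d ≥ 1, p ≥ 1, n ≥ 1, x : Fin n → ℝ^d, ε > 0, η : [0,∞) → [0,∞), M > 0, and let S ⊆ Fin n. Let f, g : Fin n → ℝ satisfy |f i| ≤ M and |g i| ≤ M for all i ∈ Fin n, and f i = g i for all i ∉ S. Then |E_n(f) − E_n(g)| ≤ (2^{p+1} M^p / (ε^{p+d} n²)) · Σ_{i ∈ S} Σ_{j ∈ Fin n} η(‖x i − x j‖/ε). -/
open MeasureTheory Metric Set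
open scoped ENNReal BigOperators

theorem stmt9 (d n : ℕ) (hd : 1 ≤ d) (hn : 1 ≤ n)
    (p ε M : ℝ) (hp : 1 ≤ p) (hε : 0 < ε) (hM : 0 < M)
    (x : Fin n → EuclideanSpace ℝ (Fin d))
    (η : ℝ → ℝ) (hηnonneg : ∀ t, 0 ≤ t → 0 ≤ η t)
    (S : Finset (Fin n))
    (f g : Fin n → ℝ)
    (hfM : ∀ i, |f i| ≤ M) (hgM : ∀ i, |g i| ≤ M)
    (hfg : ∀ i ∉ S, f i = g i) :
    |graphEnergy d n x ε η p f - graphEnergy d n x ε η p g| ≤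
      (2 ^ (p + 1) * M ^ p / (ε ^ (p + (d : ℝ)) * (n : ℝ) ^ 2)) *
        ∑ i ∈ S, ∑ j, η (‖x i - x j‖ / ε) := by
  have hn0 : (0:ℝ) < (n:ℝ) := by exact_mod_cast Nat.lt_of_lt_of_le Nat.zero_lt_one hn
  set c : ℝ := ε ^ (p + (d : ℝ)) * (n : ℝ) ^ 2 with hc
  have hcpos : 0 < c := mul_pos (Real.rpow_pos_of_pos hε _) (by positivity)
  -- kernel weights
  set w : Fin n → Fin n → ℝ := fun i j => η (‖x i - x j‖ / ε) with hw
  have hwnonneg : ∀ i j, 0 ≤ w i j := fun i j =>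
    hηnonneg _ (div_nonneg (norm_nonneg _) hε.le)
  have hwsymm : ∀ i j, w i j = w j i := fun i j => by
    simp [hw, norm_sub_rev]
  -- the difference terms
  set t : Fin n → Fin n → ℝ :=
    fun i j => w i j * (|f i - f j| ^ p - |g i - g j| ^ p) with ht
  have htsymm : ∀ i j, t i j = t j i := fun i j => by
    simp [ht, hwsymm i j, abs_sub_comm (f i), abs_sub_comm (g i)]
  have htzero : ∀ i ∉ S, ∀ j ∉ S, t i j = 0 := by
    intro i hi j hj
    simp [ht, hfg i hi, hfg j hj]
  have htbound : ∀ i j, |t i j| ≤ w i j * (2 ^ p * M ^ p) := by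
    intro i j
    have h2M : (0:ℝ) ≤ 2 * M := by positivity
    have hA : |f i - f j| ≤ 2 * M := by
      calc |f i - f j| ≤ |f i| + |f j| := abs_sub _ _
        _ ≤ M + M := add_le_add (hfM i) (hfM j)
        _ = 2 * M := by ring
    have hB : |g i - g j| ≤ 2 * M := by
      calc |g i - g j| ≤ |g i| + |g j| := abs_sub _ _
        _ ≤ M + M := add_le_add (hgM i) (hgM j)
        _ = 2 * M := by ring
    have hAp : |f i - f j| ^ p ≤ (2 * M) ^ p :=
      Real.rpow_le_rpow (abs_nonneg _) hA (le_trans zero_le_one hp)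
    have hBp : |g i - g j| ^ p ≤ (2 * M) ^ p :=
      Real.rpow_le_rpow (abs_nonneg _) hB (le_trans zero_le_one hp)
    have hApn : (0:ℝ) ≤ |f i - f j| ^ p := Real.rpow_nonneg (abs_nonneg _) _
    have hBpn : (0:ℝ) ≤ |g i - g j| ^ p := Real.rpow_nonneg (abs_nonneg _) _
    have habs : abs (|f i - f j| ^ p - |g i - g j| ^ p) ≤ (2 * M) ^ p := by
      rw [abs_sub_le_iff]
      constructor <;> linarith
    have hmul : (2 * M) ^ p = 2 ^ p * M ^ p :=
      Real.mul_rpow (by norm_num) hM.le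
    calc |t i j| = w i j * abs (|f i - f j| ^ p - |g i - g j| ^ p) := by
          rw [ht]; rw [abs_mul, abs_of_nonneg (hwnonneg i j)]
      _ ≤ w i j * (2 ^ p * M ^ p) := by
          rw [← hmul]; exact mul_le_mul_of_nonneg_left habs (hwnonneg i j)
  -- key inequality on the double sum
  have key : |∑ i, ∑ j, t i j| ≤ 2 ^ (p+1) * M ^ p * ∑ i ∈ S, ∑ j, w i j := by
    have h1 : |∑ i, ∑ j, t i j| ≤ ∑ i, ∑ j, |t i j| := by
      refine le_trans (Finset.abs_sum_le_sum_abs _ _) ?_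
      exact Finset.sum_le_sum fun i _ => Finset.abs_sum_le_sum_abs _ _
    have hsplit : ∑ i, ∑ j, |t i j| =
        (∑ i ∈ Finset.univ \ S, ∑ j, |t i j|) + ∑ i ∈ S, ∑ j, |t i j| :=
      (Finset.sum_sdiff (Finset.subset_univ S)).symm
    have h2 : ∑ i ∈ Finset.univ \ S, ∑ j, |t i j| ≤ ∑ i ∈ S, ∑ j, |t i j| := by
      have hinner : ∀ i ∈ Finset.univ \ S, ∑ j, |t i j| = ∑ j ∈ S, |t i j| := by
        intro i hi
        rw [Finset.mem_sdiff] at hi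
        refine (Finset.sum_subset (Finset.subset_univ S) ?_).symm
        intro j _ hj
        rw [htzero i hi.2 j hj, abs_zero]
      calc ∑ i ∈ Finset.univ \ S, ∑ j, |t i j|
          = ∑ i ∈ Finset.univ \ S, ∑ j ∈ S, |t i j| := Finset.sum_congr rfl hinner
        _ ≤ ∑ i, ∑ j ∈ S, |t i j| := by
            refine Finset.sum_le_sum_of_subset_of_nonneg (Finset.sdiff_subset) ?_
            intro i _ _
            exact Finset.sum_nonneg fun j _ => abs_nonneg _
        _ = ∑ j ∈ S, ∑ i, |t i j| := Finset.sum_comm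
        _ = ∑ i ∈ S, ∑ j, |t i j| := by
            refine Finset.sum_congr rfl fun i _ => Finset.sum_congr rfl fun j _ => ?_
            rw [htsymm]
    have h3 : ∑ i ∈ S, ∑ j, |t i j| ≤ 2 ^ p * M ^ p * ∑ i ∈ S, ∑ j, w i j := by
      rw [Finset.mul_sum]
      refine Finset.sum_le_sum fun i _ => ?_
      rw [Finset.mul_sum]
      refine Finset.sum_le_sum fun j _ => ?_
      calc |t i j| ≤ w i j * (2 ^ p * M ^ p) := htbound i j
        _ = 2 ^ p * M ^ p * w i j := by ring
    have h2p : (2:ℝ) ^ (p+1) = 2 * 2 ^ p := by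
      rw [Real.rpow_add (by norm_num : (0:ℝ) < 2), Real.rpow_one]; ring
    calc |∑ i, ∑ j, t i j| ≤ ∑ i, ∑ j, |t i j| := h1
      _ = (∑ i ∈ Finset.univ \ S, ∑ j, |t i j|) + ∑ i ∈ S, ∑ j, |t i j| := hsplit
      _ ≤ 2 * ∑ i ∈ S, ∑ j, |t i j| := by linarith
      _ ≤ 2 * (2 ^ p * M ^ p * ∑ i ∈ S, ∑ j, w i j) := by
          have := h3; nlinarith [h3]
      _ = 2 ^ (p+1) * M ^ p * ∑ i ∈ S, ∑ j, w i j := by rw [h2p]; ring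
  -- assemble
  have hE : graphEnergy d n x ε η p f - graphEnergy d n x ε η p g
      = (1 / c) * ∑ i, ∑ j, t i j := by
    simp only [graphEnergy, ht, hw, ← hc, mul_sub, Finset.sum_sub_distrib, mul_sub]
  rw [hE, abs_mul, abs_of_pos (by positivity : (0:ℝ) < 1 / c)]
  calc (1 / c) * |∑ i, ∑ j, t i j|
      ≤ (1 / c) * (2 ^ (p+1) * M ^ p * ∑ i ∈ S, ∑ j, w i j) :=
        mul_le_mul_of_nonneg_left key (by positivity)
    _ = (2 ^ (p + 1) * M ^ p / c) * ∑ i ∈ S, ∑ j, w i j := by ring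
end

section
/- Let d ≥ 1, p ≥ 1, and let η : [0,∞) → [0,∞) be nonincreasing and measurable; define η̃(t) = η(0) for t ∈ [0,1] and η̃(t) = η(t) for t > 1, and assume γ̃ := ∫_{ℝ^d} η̃(‖w‖) dw < ∞. Let Ω ⊆ ℝ^d be a Borel set, μ a probability measure on Ω with density ρ ≤ ρ_max with respect to Lebesgue measure, n ≥ 1, x : Fin n → ℝ^d with empirical measure μ_n, ε > 0, and let T : Ω → ℝ^d be Borel measurable with pushforward μ ∘ T⁻¹ = μ_n and ‖T(w) − w‖ ≤ ε for μ-a.e. w. Let S ⊆ Fin n have N elements, let M > 0, and let y : S → ℝ satisfy |y i| ≤ M for all i ∈ S. Then inf{ E_n(f) : f : Fin n → ℝ, |f i| ≤ M for all i, and f i = y i for all i ∈ S } ≤ inf{ E_n(f) : f : Fin n → ℝ, |f i| ≤ M for all i } + 2^{p+d+1} · M^p · N · ρ_max · γ̃ / (ε^p n). In particular, if ε = ε_n with ε_n^p n → ∞ as n → ∞, the gap between the constrained and unconstrained infima over the sup-norm M-ball tends to 0. -/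
open MeasureTheory Metric Set
open scoped ENNReal BigOperators

lemma rowBound (d n : ℕ) (hn : 1 ≤ n)
    (η : ℝ → ℝ) (hη : Measurable η) (hηnonneg : ∀ t, 0 ≤ t → 0 ≤ η t)
    (hηmono : AntitoneOn η (Set.Ici 0))
    (ηt : ℝ → ℝ) (hηt : ηt = fun t => if t ≤ 1 then η 0 else η t)
    (γ : ℝ) (hγint : Integrable (fun w : EuclideanSpace ℝ (Fin d) => ηt ‖w‖))
    (hγ : γ = ∫ w : EuclideanSpace ℝ (Fin d), ηt ‖w‖) (hγ0 : 0 ≤ γ)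
    (Ω : Set (EuclideanSpace ℝ (Fin d)))
    (ρ : EuclideanSpace ℝ (Fin d) → ℝ) (ρmax : ℝ) (hρ0 : 0 ≤ ρmax)
    (μ : Measure (EuclideanSpace ℝ (Fin d)))
    (hμ : μ = (volume.restrict Ω).withDensity (fun w => ENNReal.ofReal (ρ w)))
    (hρmax : ∀ᵐ w ∂(volume.restrict Ω), ρ w ≤ ρmax)
    (x : Fin n → EuclideanSpace ℝ (Fin d)) (ε : ℝ) (hε : 0 < ε)
    (T : EuclideanSpace ℝ (Fin d) → EuclideanSpace ℝ (Fin d)) (hT : Measurable T)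
    (hpush : μ.map T = empiricalMeasure d n x)
    (hclose : ∀ᵐ w ∂μ, ‖T w - w‖ ≤ ε) (i : Fin n) :
    ∑ j, η (‖x i - x j‖ / ε) ≤ n * (ρmax * ((2*ε)^d * γ)) := by
  have hηt_meas : Measurable ηt := by
    rw [hηt]
    exact Measurable.ite (measurableSet_le measurable_id measurable_const) measurable_const hη
  have hηtnn : ∀ t, 0 ≤ t → 0 ≤ ηt t := by
    rw [hηt]; intro t ht; dsimp only
    split
    · exact hηnonneg 0 le_rfl
    · exact hηnonneg t ht
  have hg : Measurable fun v : EuclideanSpace ℝ (Fin d) =>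
      ENNReal.ofReal (η (‖x i - v‖ / ε)) :=
    (hη.comp ((measurable_const.sub measurable_id).norm.div_const ε)).ennreal_ofReal
  have hpt : ∀ w : EuclideanSpace ℝ (Fin d), ‖T w - w‖ ≤ ε →
      η (‖x i - T w‖ / ε) ≤ ηt (‖x i - w‖ / (2*ε)) := by
    intro w hw
    rw [hηt]; dsimp only
    by_cases h : ‖x i - w‖ / (2*ε) ≤ 1
    · rw [if_pos h]
      exact hηmono (self_mem_Ici) (mem_Ici.2 (by positivity)) (by positivity)
    · rw [if_neg h]
      push_neg at h
      have h2 : 2*ε < ‖x i - w‖ := (one_lt_div (by positivity)).1 h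
      have htri : ‖x i - w‖ ≤ ‖x i - T w‖ + ‖T w - w‖ := by
        have : x i - w = (x i - T w) + (T w - w) := by abel
        rw [this]; exact norm_add_le _ _
      refine hηmono (mem_Ici.2 (by positivity)) (mem_Ici.2 (by positivity)) ?_
      rw [div_le_div_iff₀ (by positivity) hε]
      nlinarith [norm_nonneg (x i - T w)]
  have hintval : Integrable (fun w : EuclideanSpace ℝ (Fin d) => ηt (‖x i - w‖ / (2*ε)))
      ∧ ∫ w : EuclideanSpace ℝ (Fin d), ηt (‖x i - w‖ / (2*ε)) = (2*ε)^d * γ := by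
    have h2ε : (2*ε) ≠ 0 := by positivity
    have hsm : (fun u : EuclideanSpace ℝ (Fin d) => ηt (‖u‖ / (2*ε)))
        = fun u => ηt ‖(2*ε)⁻¹ • u‖ := by
      funext u
      rw [norm_smul, norm_inv, Real.norm_eq_abs, abs_of_pos (by positivity : (0:ℝ) < 2*ε)]
      congr 1; ring
    have hG : Integrable (fun u : EuclideanSpace ℝ (Fin d) => ηt (‖u‖ / (2*ε))) := by
      rw [hsm]
      exact hγint.comp_smul (R := (2*ε)⁻¹) (inv_ne_zero h2ε)
    have h1 : (fun w : EuclideanSpace ℝ (Fin d) => ηt (‖x i - w‖ / (2*ε)))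
        = fun w => (fun u : EuclideanSpace ℝ (Fin d) => ηt (‖u‖ / (2*ε))) (w - x i) := by
      funext w; simp [norm_sub_rev]
    constructor
    · rw [h1]; exact hG.comp_sub_right (x i)
    · rw [h1, integral_sub_right_eq_self (μ := volume)
        (fun u : EuclideanSpace ℝ (Fin d) => ηt (‖u‖ / (2*ε))) (x i), hsm]
      have := Measure.integral_comp_inv_smul_of_nonneg
        (volume : Measure (EuclideanSpace ℝ (Fin d)))
        (fun v : EuclideanSpace ℝ (Fin d) => ηt ‖v‖) (by positivity : (0:ℝ) ≤ 2*ε)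
      rw [this, finrank_euclideanSpace_fin, smul_eq_mul, hγ]
  have hμle : μ ≤ (ENNReal.ofReal ρmax) • (volume.restrict Ω) := by
    rw [hμ, Measure.le_iff]
    intro s hs
    rw [withDensity_apply _ hs, Measure.smul_apply, smul_eq_mul]
    calc ∫⁻ a in s, ENNReal.ofReal (ρ a) ∂(volume.restrict Ω)
        ≤ ∫⁻ _ in s, ENNReal.ofReal ρmax ∂(volume.restrict Ω) :=
          lintegral_mono_ae (ae_restrict_of_ae
            (hρmax.mono fun w hw => ENNReal.ofReal_le_ofReal hw))
      _ = ENNReal.ofReal ρmax * (volume.restrict Ω) s := by rw [setLIntegral_const]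
  have main : (↑n : ℝ≥0∞)⁻¹ * ∑ j, ENNReal.ofReal (η (‖x i - x j‖ / ε))
      ≤ ENNReal.ofReal (ρmax * ((2*ε)^d * γ)) := by
    calc (↑n : ℝ≥0∞)⁻¹ * ∑ j, ENNReal.ofReal (η (‖x i - x j‖ / ε))
        = ∫⁻ v, ENNReal.ofReal (η (‖x i - v‖ / ε)) ∂(empiricalMeasure d n x) := by
          rw [empiricalMeasure, lintegral_smul_measure, lintegral_finset_sum_measure]
          simp_rw [lintegral_dirac' _ hg]
          rw [smul_eq_mul]
      _ = ∫⁻ w, ENNReal.ofReal (η (‖x i - T w‖ / ε)) ∂μ := by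
          rw [← hpush, lintegral_map hg hT]
      _ ≤ ∫⁻ w, ENNReal.ofReal (ηt (‖x i - w‖ / (2*ε))) ∂μ := by
          refine lintegral_mono_ae ?_
          filter_upwards [hclose] with w hw
          exact ENNReal.ofReal_le_ofReal (hpt w hw)
      _ ≤ ∫⁻ w, ENNReal.ofReal (ηt (‖x i - w‖ / (2*ε)))
            ∂((ENNReal.ofReal ρmax) • (volume.restrict Ω)) :=
          lintegral_mono' hμle le_rfl
      _ = ENNReal.ofReal ρmax * ∫⁻ w, ENNReal.ofReal (ηt (‖x i - w‖ / (2*ε)))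
            ∂(volume.restrict Ω) := lintegral_smul_measure _ _
      _ ≤ ENNReal.ofReal ρmax * ∫⁻ w, ENNReal.ofReal (ηt (‖x i - w‖ / (2*ε))) := by
          gcongr
          exact Measure.restrict_le_self
      _ = ENNReal.ofReal ρmax * ENNReal.ofReal ((2*ε)^d * γ) := by
          rw [← ofReal_integral_eq_lintegral_ofReal hintval.1
            (ae_of_all _ fun w => hηtnn _ (by positivity)), hintval.2]
      _ = ENNReal.ofReal (ρmax * ((2*ε)^d * γ)) := by
          rw [← ENNReal.ofReal_mul hρ0]
  have hn' : (↑n : ℝ≥0∞) ≠ 0 := by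
    simp only [ne_eq, Nat.cast_eq_zero]; omega
  have hsum : ∑ j, ENNReal.ofReal (η (‖x i - x j‖ / ε))
      = ENNReal.ofReal (∑ j, η (‖x i - x j‖ / ε)) := by
    rw [ENNReal.ofReal_sum_of_nonneg fun j _ => hηnonneg _ (by positivity)]
  have step : ENNReal.ofReal (∑ j, η (‖x i - x j‖ / ε))
      ≤ ENNReal.ofReal ((n : ℝ) * (ρmax * ((2*ε)^d * γ))) := by
    calc ENNReal.ofReal (∑ j, η (‖x i - x j‖ / ε))
        = (↑n : ℝ≥0∞) * ((↑n : ℝ≥0∞)⁻¹ * ∑ j, ENNReal.ofReal (η (‖x i - x j‖ / ε))) := by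
          rw [← mul_assoc, ENNReal.mul_inv_cancel hn' (ENNReal.natCast_ne_top n), one_mul, hsum]
      _ ≤ (↑n : ℝ≥0∞) * ENNReal.ofReal (ρmax * ((2*ε)^d * γ)) := by gcongr
      _ = ENNReal.ofReal ((n : ℝ) * (ρmax * ((2*ε)^d * γ))) := by
          rw [ENNReal.ofReal_mul (Nat.cast_nonneg n : (0:ℝ) ≤ (n:ℝ)), ENNReal.ofReal_natCast]
  exact (ENNReal.ofReal_le_ofReal_iff (by positivity)).1 step

theorem stmt10 (d n N : ℕ) (hd : 1 ≤ d) (hn : 1 ≤ n)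
    (p : ℝ) (hp : 1 ≤ p)
    (η : ℝ → ℝ) (hη : Measurable η) (hηnonneg : ∀ t, 0 ≤ t → 0 ≤ η t)
    (hηmono : AntitoneOn η (Set.Ici 0))
    (ηt : ℝ → ℝ) (hηt : ηt = fun t => if t ≤ 1 then η 0 else η t)
    (γ : ℝ) (hγint : Integrable (fun w : EuclideanSpace ℝ (Fin d) => ηt ‖w‖))
    (hγ : γ = ∫ w : EuclideanSpace ℝ (Fin d), ηt ‖w‖)
    (Ω : Set (EuclideanSpace ℝ (Fin d))) (hΩ : MeasurableSet Ω)
    (ρ : EuclideanSpace ℝ (Fin d) → ℝ) (ρmax : ℝ)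
    (μ : Measure (EuclideanSpace ℝ (Fin d)))
    (hμ : μ = (volume.restrict Ω).withDensity (fun w => ENNReal.ofReal (ρ w)))
    (hprob : IsProbabilityMeasure μ)
    (hρmax : ∀ᵐ w ∂(volume.restrict Ω), ρ w ≤ ρmax)
    (x : Fin n → EuclideanSpace ℝ (Fin d)) (ε : ℝ) (hε : 0 < ε)
    (T : EuclideanSpace ℝ (Fin d) → EuclideanSpace ℝ (Fin d)) (hT : Measurable T)
    (hpush : μ.map T = empiricalMeasure d n x)
    (hclose : ∀ᵐ w ∂μ, ‖T w - w‖ ≤ ε)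
    (S : Finset (Fin n)) (hS : S.card = N)
    (M : ℝ) (hM : 0 < M) (y : Fin n → ℝ) (hy : ∀ i ∈ S, |y i| ≤ M) :
    sInf {e : ℝ | ∃ f : Fin n → ℝ, (∀ i, |f i| ≤ M) ∧ (∀ i ∈ S, f i = y i) ∧
        e = graphEnergy d n x ε η p f} ≤
      sInf {e : ℝ | ∃ f : Fin n → ℝ, (∀ i, |f i| ≤ M) ∧ e = graphEnergy d n x ε η p f} +
        2 ^ (p + (d : ℝ) + 1) * M ^ p * N * ρmax * γ / (ε ^ p * n) := by
  subst hS
  -- positivity facts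
  have hγ0 : 0 ≤ γ := by
    rw [hγ]
    refine integral_nonneg fun w => ?_
    rw [hηt]; dsimp only
    split
    · exact hηnonneg 0 le_rfl
    · exact hηnonneg _ (norm_nonneg w)
  have hρ0 : 0 ≤ ρmax := by
    by_contra hcon
    push_neg at hcon
    have h0 : (fun w => ENNReal.ofReal (ρ w)) =ᵐ[volume.restrict Ω]
        (0 : EuclideanSpace ℝ (Fin d) → ℝ≥0∞) := by
      filter_upwards [hρmax] with w hw
      simp [ENNReal.ofReal_eq_zero.2 (le_of_lt (lt_of_le_of_lt hw hcon))]
    have hμ0 : μ = 0 := by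
      rw [hμ, withDensity_congr_ae h0, withDensity_zero]
    have h1 := hprob.measure_univ
    rw [hμ0] at h1
    simp at h1
  have rowB : ∀ i : Fin n, ∑ j, η (‖x i - x j‖ / ε) ≤ n * (ρmax * ((2*ε)^d * γ)) :=
    fun i => rowBound d n hn η hη hηnonneg hηmono ηt hηt γ hγint hγ hγ0 Ω ρ ρmax hρ0 μ hμ
      hρmax x ε hε T hT hpush hclose i
  have hεp : (0:ℝ) < ε ^ p := Real.rpow_pos_of_pos hε p
  have hεpd : (0:ℝ) < ε ^ (p + (d:ℝ)) := Real.rpow_pos_of_pos hε _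
  have hn0 : (0:ℝ) < n := by exact_mod_cast hn
  have hc0 : (0:ℝ) ≤ 1 / (ε ^ (p + (d:ℝ)) * (n:ℝ)^2) := by positivity
  have hann : ∀ i j : Fin n, 0 ≤ η (‖x i - x j‖ / ε) := fun i j => hηnonneg _ (by positivity)
  have hEnn : ∀ f : Fin n → ℝ, 0 ≤ graphEnergy d n x ε η p f := by
    intro f
    unfold graphEnergy
    refine mul_nonneg hc0 ?_
    exact Finset.sum_nonneg fun i _ => Finset.sum_nonneg fun j _ =>
      mul_nonneg (hann i j) (Real.rpow_nonneg (abs_nonneg _) _)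
  set K : ℝ := 2 ^ (p + (d : ℝ) + 1) * M ^ p * (S.card : ℝ) * ρmax * γ / (ε ^ p * n) with hK
  -- gap bound for each admissible f
  have hgap : ∀ f : Fin n → ℝ, (∀ i, |f i| ≤ M) →
      graphEnergy d n x ε η p (fun i => if i ∈ S then y i else f i)
        ≤ graphEnergy d n x ε η p f + K := by
    intro f hf
    set g : Fin n → ℝ := fun i => if i ∈ S then y i else f i with hgdef
    have hgb : ∀ i, |g i| ≤ M := by
      intro i; rw [hgdef]; dsimp only; split
      · exact hy i ‹_›
      · exact hf i
    have habs : ∀ i j : Fin n, |g i - g j| ^ p ≤ (2*M) ^ p := by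
      intro i j
      refine Real.rpow_le_rpow (abs_nonneg _) ?_ (by linarith)
      calc |g i - g j| = |g i + -(g j)| := by rw [sub_eq_add_neg]
        _ ≤ |g i| + |-(g j)| := abs_add_le _ _
        _ = |g i| + |g j| := by rw [abs_neg]
        _ ≤ 2*M := by linarith [hgb i, hgb j]
    have hterm : ∀ i j : Fin n,
        η (‖x i - x j‖ / ε) * |g i - g j| ^ p
          ≤ η (‖x i - x j‖ / ε) * |f i - f j| ^ p
            + ((if i ∈ S then η (‖x i - x j‖ / ε) * (2*M)^p else 0)
              + (if j ∈ S then η (‖x i - x j‖ / ε) * (2*M)^p else 0)) := by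
      intro i j
      have hf0 : 0 ≤ η (‖x i - x j‖ / ε) * |f i - f j| ^ p :=
        mul_nonneg (hann i j) (Real.rpow_nonneg (abs_nonneg _) _)
      have hb : η (‖x i - x j‖ / ε) * |g i - g j| ^ p ≤ η (‖x i - x j‖ / ε) * (2*M)^p :=
        mul_le_mul_of_nonneg_left (habs i j) (hann i j)
      have h2M : (0:ℝ) ≤ η (‖x i - x j‖ / ε) * (2*M)^p :=
        mul_nonneg (hann i j) (Real.rpow_nonneg (by linarith) _)
      by_cases hi : i ∈ S
      · rw [if_pos hi]
        split <;> linarith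
      by_cases hj : j ∈ S
      · rw [if_neg hi, if_pos hj]; linarith
      · rw [if_neg hi, if_neg hj]
        have hgi : g i = f i := if_neg hi
        have hgj : g j = f j := if_neg hj
        rw [hgi, hgj]; linarith
    have c2nn : (0:ℝ) ≤ (2*M)^p := Real.rpow_nonneg (by linarith) _
    have b1 : ∑ i, ∑ j, (if i ∈ S then η (‖x i - x j‖ / ε) * (2*M)^p else 0)
        ≤ (S.card : ℝ) * ((n:ℝ) * (ρmax * ((2*ε)^d * γ)) * (2*M)^p) := by
      have e1 : ∀ i : Fin n, ∑ j, (if i ∈ S then η (‖x i - x j‖ / ε) * (2*M)^p else 0)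
          = if i ∈ S then (∑ j, η (‖x i - x j‖ / ε)) * (2*M)^p else 0 := by
        intro i; split
        · rw [Finset.sum_mul]
        · simp
      simp_rw [e1]
      rw [Finset.sum_ite_mem, Finset.univ_inter]
      calc ∑ i ∈ S, (∑ j, η (‖x i - x j‖ / ε)) * (2*M)^p
          ≤ ∑ _i ∈ S, ((n:ℝ) * (ρmax * ((2*ε)^d * γ))) * (2*M)^p :=
            Finset.sum_le_sum fun i _ => mul_le_mul_of_nonneg_right (rowB i) c2nn
        _ = (S.card : ℝ) * ((n:ℝ) * (ρmax * ((2*ε)^d * γ)) * (2*M)^p) := by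
            rw [Finset.sum_const, nsmul_eq_mul]
    have b2 : ∑ i, ∑ j, (if j ∈ S then η (‖x i - x j‖ / ε) * (2*M)^p else 0)
        ≤ (S.card : ℝ) * ((n:ℝ) * (ρmax * ((2*ε)^d * γ)) * (2*M)^p) := by
      rw [Finset.sum_comm]
      have e1 : ∀ j : Fin n, ∑ i, (if j ∈ S then η (‖x i - x j‖ / ε) * (2*M)^p else 0)
          = if j ∈ S then (∑ i, η (‖x j - x i‖ / ε)) * (2*M)^p else 0 := by
        intro j; split
        · rw [Finset.sum_mul]
          exact Finset.sum_congr rfl fun i _ => by rw [norm_sub_rev]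
        · simp
      simp_rw [e1]
      rw [Finset.sum_ite_mem, Finset.univ_inter]
      calc ∑ j ∈ S, (∑ i, η (‖x j - x i‖ / ε)) * (2*M)^p
          ≤ ∑ _j ∈ S, ((n:ℝ) * (ρmax * ((2*ε)^d * γ))) * (2*M)^p :=
            Finset.sum_le_sum fun j _ => mul_le_mul_of_nonneg_right (rowB j) c2nn
        _ = (S.card : ℝ) * ((n:ℝ) * (ρmax * ((2*ε)^d * γ)) * (2*M)^p) := by
            rw [Finset.sum_const, nsmul_eq_mul]
    have hsum : ∑ i, ∑ j, η (‖x i - x j‖ / ε) * |g i - g j| ^ p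
        ≤ (∑ i, ∑ j, η (‖x i - x j‖ / ε) * |f i - f j| ^ p)
          + 2 * ((S.card : ℝ) * ((n:ℝ) * (ρmax * ((2*ε)^d * γ)) * (2*M)^p)) := by
      have h1 : ∑ i, ∑ j, η (‖x i - x j‖ / ε) * |g i - g j| ^ p
          ≤ ∑ i, ∑ j, (η (‖x i - x j‖ / ε) * |f i - f j| ^ p
            + ((if i ∈ S then η (‖x i - x j‖ / ε) * (2*M)^p else 0)
              + (if j ∈ S then η (‖x i - x j‖ / ε) * (2*M)^p else 0))) :=
        Finset.sum_le_sum fun i _ => Finset.sum_le_sum fun j _ => hterm i j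
      simp only [Finset.sum_add_distrib] at h1
      linarith [b1, b2]
    have halg : (1 / (ε ^ (p + (d:ℝ)) * (n:ℝ)^2)) *
        (2 * ((S.card : ℝ) * ((n:ℝ) * (ρmax * ((2*ε)^d * γ)) * (2*M)^p))) = K := by
      rw [hK]
      have e1 : (2:ℝ) ^ (p + (d:ℝ) + 1) = 2^p * 2^(d:ℕ) * 2 := by
        rw [Real.rpow_add two_pos (p + (d:ℝ)) 1, Real.rpow_add two_pos p (d:ℝ),
          Real.rpow_one, Real.rpow_natCast 2 d]
      have e2 : ε ^ (p + (d:ℝ)) = ε ^ p * ε ^ (d:ℕ) := by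
        rw [Real.rpow_add hε p (d:ℝ), Real.rpow_natCast ε d]
      have e3 : (2*M:ℝ) ^ p = 2^p * M^p :=
        Real.mul_rpow (by norm_num) hM.le
      have e4 : (2*ε:ℝ) ^ (d:ℕ) = 2^(d:ℕ) * ε^(d:ℕ) := mul_pow 2 ε d
      rw [e1, e2, e3, e4]
      have h1 : (ε:ℝ)^p ≠ 0 := hεp.ne'
      have h2 : (ε:ℝ)^(d:ℕ) ≠ 0 := by positivity
      have h3 : (n:ℝ) ≠ 0 := hn0.ne'
      field_simp
    calc graphEnergy d n x ε η p g
        = (1 / (ε ^ (p + (d:ℝ)) * (n:ℝ)^2)) *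
            ∑ i, ∑ j, η (‖x i - x j‖ / ε) * |g i - g j| ^ p := rfl
      _ ≤ (1 / (ε ^ (p + (d:ℝ)) * (n:ℝ)^2)) *
            ((∑ i, ∑ j, η (‖x i - x j‖ / ε) * |f i - f j| ^ p)
              + 2 * ((S.card : ℝ) * ((n:ℝ) * (ρmax * ((2*ε)^d * γ)) * (2*M)^p))) :=
          mul_le_mul_of_nonneg_left hsum hc0
      _ = graphEnergy d n x ε η p f + K := by
          rw [mul_add, halg]; rfl
  -- inf argument
  set A := {e : ℝ | ∃ f : Fin n → ℝ, (∀ i, |f i| ≤ M) ∧ (∀ i ∈ S, f i = y i) ∧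
      e = graphEnergy d n x ε η p f} with hA
  set B := {e : ℝ | ∃ f : Fin n → ℝ, (∀ i, |f i| ≤ M) ∧
      e = graphEnergy d n x ε η p f} with hB
  have hBne : B.Nonempty := by
    refine ⟨graphEnergy d n x ε η p (fun _ => 0), fun _ => 0, fun i => ?_, rfl⟩
    simp [hM.le]
  have hAbdd : BddBelow A := by
    refine ⟨0, fun e he => ?_⟩
    obtain ⟨f, _, _, rfl⟩ := he
    exact hEnn f
  have key : ∀ b ∈ B, sInf A ≤ b + K := by
    rintro b ⟨f, hf, rfl⟩
    have hmem : graphEnergy d n x ε η p (fun i => if i ∈ S then y i else f i) ∈ A := by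
      refine ⟨fun i => if i ∈ S then y i else f i, fun i => ?_, fun i hi => if_pos hi, rfl⟩
      dsimp only; split
      · exact hy i ‹_›
      · exact hf i
    exact le_trans (csInf_le hAbdd hmem) (hgap f hf)
  have hfin : sInf A - K ≤ sInf B := le_csInf hBne fun b hb => by linarith [key b hb]
  linarith
end

section
/- Let d ≥ 1, p ≥ 1, n ≥ 2, x : Fin n → ℝ^d, ε > 0, and let η : [0,∞) → [0,∞) be nonincreasing. Fix k ∈ Fin n and define the spike function f : Fin n → ℝ by f k = 1 and f j = 0 for j ≠ k. Then E_n(f) = (2/(ε^{p+d} n²)) · Σ_{j ≠ k} η(‖x k − x j‖/ε), and in particular E_n(f) ≤ 2 η(0)/(ε^{p+d} n). If moreover there are a Borel set Ω ⊆ ℝ^d, a probability measure μ on Ω with density ρ ≤ ρ_max with respect to Lebesgue measure, and a Borel map T : Ω → ℝ^d with pushforward μ ∘ T⁻¹ equal to the empirical measure μ_n and ‖T(w) − w‖ ≤ ε for μ-a.e. w, and if γ̃ := ∫_{ℝ^d} η̃(‖w‖) dw < ∞ where η̃(t) = η(0) for t ∈ [0,1] and η̃(t) = η(t) for t > 1,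 then E_n(f) ≤ 2^{d+1} ρ_max γ̃/(ε^p n); hence the spike's energy tends to 0 whenever ε = ε_n satisfies ε_n^p n → ∞. -/
open MeasureTheory Metric Set
open scoped ENNReal BigOperators

theorem stmt11 (d n : ℕ) (hd : 1 ≤ d) (hn : 2 ≤ n)
    (p : ℝ) (hp : 1 ≤ p)
    (x : Fin n → EuclideanSpace ℝ (Fin d)) (ε : ℝ) (hε : 0 < ε)
    (η : ℝ → ℝ) (hηnonneg : ∀ t, 0 ≤ t → 0 ≤ η t)
    (hηmono : AntitoneOn η (Set.Ici 0))
    (k : Fin n) (f : Fin n → ℝ) (hf : f = fun j => if j = k then (1 : ℝ) else 0) :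
    graphEnergy d n x ε η p f =
        (2 / (ε ^ (p + (d : ℝ)) * (n : ℝ) ^ 2)) *
          ∑ j ∈ Finset.univ.erase k, η (‖x k - x j‖ / ε) ∧
    graphEnergy d n x ε η p f ≤ 2 * η 0 / (ε ^ (p + (d : ℝ)) * n) ∧
    (∀ (Ω : Set (EuclideanSpace ℝ (Fin d))), MeasurableSet Ω →
      ∀ (ρ : EuclideanSpace ℝ (Fin d) → ℝ) (ρmax : ℝ)
        (μ : Measure (EuclideanSpace ℝ (Fin d))),
        μ = (volume.restrict Ω).withDensity (fun w => ENNReal.ofReal (ρ w)) →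
        IsProbabilityMeasure μ →
        (∀ᵐ w ∂(volume.restrict Ω), ρ w ≤ ρmax) →
      ∀ (T : EuclideanSpace ℝ (Fin d) → EuclideanSpace ℝ (Fin d)), Measurable T →
        μ.map T = empiricalMeasure d n x →
        (∀ᵐ w ∂μ, ‖T w - w‖ ≤ ε) →
      ∀ (ηt : ℝ → ℝ), ηt = (fun t => if t ≤ 1 then η 0 else η t) →
      ∀ (γ : ℝ), Integrable (fun w : EuclideanSpace ℝ (Fin d) => ηt ‖w‖) →
        γ = ∫ w : EuclideanSpace ℝ (Fin d), ηt ‖w‖ →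
        graphEnergy d n x ε η p f ≤ 2 ^ (d + 1) * ρmax * γ / (ε ^ p * n)) := by
  subst hf
  have hn0 : (0 : ℝ) < n := by positivity
  have hnne : (n : ℝ) ≠ 0 := hn0.ne'
  have hεpd : (0 : ℝ) < ε ^ (p + (d : ℝ)) := Real.rpow_pos_of_pos hε _
  have hc : (0 : ℝ) < ε ^ (p + (d : ℝ)) * (n : ℝ) ^ 2 := by positivity
  set S : ℝ := ∑ j ∈ Finset.univ.erase k, η (‖x k - x j‖ / ε) with hSdef
  have hηnn : ∀ i j : Fin n, 0 ≤ η (‖x i - x j‖ / ε) := fun i j =>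
    hηnonneg _ (by positivity)
  -- the double sum collapses to `2 * S`
  have hterm : ∀ i j : Fin n,
      η (‖x i - x j‖ / ε) * |(if i = k then (1 : ℝ) else 0) - (if j = k then 1 else 0)| ^ p
        = if i = k then (if j = k then 0 else η (‖x i - x j‖ / ε))
          else (if j = k then η (‖x i - x j‖ / ε) else 0) := by
    intro i j
    have hp0 : p ≠ 0 := by linarith
    by_cases hi : i = k <;> by_cases hj : j = k <;>
      simp [hi, hj, hp0, Real.one_rpow, Real.zero_rpow, abs_neg]
  have hsum : (∑ i, ∑ j, η (‖x i - x j‖ / ε) *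
      |(if i = k then (1 : ℝ) else 0) - (if j = k then 1 else 0)| ^ p) = 2 * S := by
    have h1 : (∑ i, ∑ j, η (‖x i - x j‖ / ε) *
        |(if i = k then (1 : ℝ) else 0) - (if j = k then 1 else 0)| ^ p)
        = ∑ i, ∑ j, (if i = k then (if j = k then 0 else η (‖x i - x j‖ / ε))
          else (if j = k then η (‖x i - x j‖ / ε) else 0)) := by
      refine Finset.sum_congr rfl fun i _ => Finset.sum_congr rfl fun j _ => hterm i j
    rw [h1, ← Finset.add_sum_erase _ _ (Finset.mem_univ k)]
    have h2 : (∑ j, if k = k then (if j = k then 0 else η (‖x k - x j‖ / ε))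
        else (if j = k then η (‖x k - x j‖ / ε) else 0)) = S := by
      rw [← Finset.add_sum_erase _ _ (Finset.mem_univ k)]
      have hFk : (if k = k then (if k = k then (0:ℝ) else η (‖x k - x k‖ / ε))
          else (if k = k then η (‖x k - x k‖ / ε) else 0)) = 0 := by simp
      rw [hFk, zero_add]
      refine Finset.sum_congr rfl fun j hj => ?_
      simp [Finset.ne_of_mem_erase hj]
    have h3 : (∑ i ∈ Finset.univ.erase k,
        ∑ j, if i = k then (if j = k then 0 else η (‖x i - x j‖ / ε))
          else (if j = k then η (‖x i - x j‖ / ε) else 0)) = S := by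
      have : ∀ i ∈ Finset.univ.erase k,
          (∑ j, if i = k then (if j = k then 0 else η (‖x i - x j‖ / ε))
            else (if j = k then η (‖x i - x j‖ / ε) else 0)) = η (‖x k - x i‖ / ε) := by
        intro i hi
        rw [Finset.sum_congr rfl (fun j _ => if_neg (Finset.ne_of_mem_erase hi))]
        rw [Finset.sum_ite_eq' Finset.univ k fun j => η (‖x i - x j‖ / ε),
          if_pos (Finset.mem_univ k), norm_sub_rev]
      rw [Finset.sum_congr rfl this]
    rw [h2, h3]; ring
  have hpart1 : graphEnergy d n x ε η p (fun j => if j = k then (1 : ℝ) else 0)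
      = (2 / (ε ^ (p + (d : ℝ)) * (n : ℝ) ^ 2)) * S := by
    unfold graphEnergy
    rw [hsum]; ring
  refine ⟨hpart1, ?_, ?_⟩
  · -- crude bound
    have hS_le : S ≤ (n : ℝ) * η 0 := by
      have h1 : ∀ j ∈ Finset.univ.erase k, η (‖x k - x j‖ / ε) ≤ η 0 := fun j _ =>
        hηmono Set.self_mem_Ici (Set.mem_Ici.2 (by positivity)) (by positivity)
      calc S ≤ ∑ _j ∈ Finset.univ.erase k, η 0 := Finset.sum_le_sum h1
        _ = ((Finset.univ.erase k).card : ℝ) * η 0 := by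
            rw [Finset.sum_const, nsmul_eq_mul]
        _ ≤ (n : ℝ) * η 0 := by
            have hη0 : 0 ≤ η 0 := hηnonneg 0 le_rfl
            have : ((Finset.univ.erase k).card : ℝ) ≤ (n : ℝ) := by
              have := Finset.card_erase_le (a := k) (s := (Finset.univ : Finset (Fin n)))
              calc ((Finset.univ.erase k).card : ℝ) ≤ ((Finset.univ : Finset (Fin n)).card : ℝ) := by
                    exact_mod_cast this
                _ = (n : ℝ) := by simp
            exact mul_le_mul_of_nonneg_right this hη0
    rw [hpart1]
    calc (2 / (ε ^ (p + (d : ℝ)) * (n : ℝ) ^ 2)) * S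
        ≤ (2 / (ε ^ (p + (d : ℝ)) * (n : ℝ) ^ 2)) * ((n : ℝ) * η 0) := by
          apply mul_le_mul_of_nonneg_left hS_le (by positivity)
      _ = 2 * η 0 / (ε ^ (p + (d : ℝ)) * n) := by
          field_simp
  · -- transport bound
    intro Ω hΩ ρ ρmax μ hμ hprob hρ T hT hmap hTε ηt hηt γ hint hγ
    have hηt_nonneg : ∀ t : ℝ, 0 ≤ t → 0 ≤ ηt t := by
      intro t ht
      rw [hηt]
      by_cases h : t ≤ 1
      · simpa [h] using hηnonneg 0 le_rfl
      · simpa [h] using hηnonneg t ht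
    have hγ0 : 0 ≤ γ := by
      rw [hγ]
      exact integral_nonneg fun w => hηt_nonneg _ (norm_nonneg w)
    set R : ℝ := 2 * ε with hRdef
    have hR : (0 : ℝ) < R := by positivity
    -- ρmax is nonnegative
    have hρmax0 : (0 : ℝ) ≤ ρmax := by
      by_contra hneg
      push_neg at hneg
      have hz : (fun w => ENNReal.ofReal (ρ w)) =ᵐ[volume.restrict Ω] (fun _ => 0) := by
        filter_upwards [hρ] with w hw
        exact ENNReal.ofReal_eq_zero.2 (by linarith)
      have : μ Set.univ = 0 := by
        rw [hμ, withDensity_apply _ MeasurableSet.univ, Measure.restrict_univ,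
          lintegral_congr_ae hz, lintegral_zero]
      rw [hprob.measure_univ] at this
      exact one_ne_zero this
    -- the majorant h and its integral
    set F : EuclideanSpace ℝ (Fin d) → ℝ := fun w => ηt ‖w‖ with hFdef
    set g : EuclideanSpace ℝ (Fin d) → ℝ := fun w => F (R⁻¹ • w) with hgdef
    have hg_eq : ∀ w : EuclideanSpace ℝ (Fin d), g w = ηt (‖w‖ / R) := by
      intro w
      simp only [hgdef, hFdef, norm_smul, norm_inv, Real.norm_eq_abs,
        abs_of_pos hR, div_eq_inv_mul]
    have hg_int : Integrable g := by
      exact (integrable_comp_smul_iff volume F (inv_ne_zero hR.ne')).2 hint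
    have hg_integral : ∫ w, g w = R ^ d * γ := by
      have := Measure.integral_comp_inv_smul_of_nonneg (volume : Measure (EuclideanSpace ℝ (Fin d)))
        F hR.le
      rw [hgdef]
      rw [this, finrank_euclideanSpace_fin, smul_eq_mul, hγ]
    set h : EuclideanSpace ℝ (Fin d) → ℝ := fun w => g (x k - w) with hhdef
    have hh_int : Integrable h := hg_int.comp_sub_left (x k)
    have hh_integral : ∫ w, h w = R ^ d * γ := by
      rw [hhdef]
      rw [integral_sub_left_eq_self g volume (x k), hg_integral]
    have hh_nonneg : ∀ w, 0 ≤ h w := by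
      intro w
      rw [hhdef]; simp only []
      rw [hg_eq]
      exact hηt_nonneg _ (by positivity)
    have hH : (∫⁻ w, ENNReal.ofReal (h w)) = ENNReal.ofReal (R ^ d * γ) := by
      rw [← ofReal_integral_eq_lintegral_ofReal hh_int
        (Filter.Eventually.of_forall hh_nonneg), hh_integral]
    -- measure comparison
    have hle : μ ≤ (ENNReal.ofReal ρmax) • volume.restrict Ω := by
      rw [hμ, ← withDensity_const]
      exact withDensity_mono (by filter_upwards [hρ] with w hw using ENNReal.ofReal_le_ofReal hw)
    -- pointwise comparison along T
    set G : EuclideanSpace ℝ (Fin d) → ℝ≥0∞ :=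
      fun w => ENNReal.ofReal (η (‖x k - w‖ / ε)) with hGdef
    have hptwise : ∀ᵐ w ∂μ, G (T w) ≤ ENNReal.ofReal (h w) := by
      filter_upwards [hTε] with w hw
      rw [hGdef]
      simp only [hhdef]
      rw [hg_eq]
      apply ENNReal.ofReal_le_ofReal
      by_cases hcase : ‖x k - w‖ ≤ R
      · have h1 : ‖x k - w‖ / R ≤ 1 := (div_le_one hR).2 hcase
        rw [hηt]
        simp only [if_pos h1]
        exact hηmono Set.self_mem_Ici (Set.mem_Ici.2 (by positivity)) (by positivity)
      · push_neg at hcase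
        have h1 : ¬(‖x k - w‖ / R ≤ 1) := by
          rw [not_le]
          exact (one_lt_div hR).2 hcase
        rw [hηt]
        simp only [if_neg h1]
        have htri : ‖x k - w‖ ≤ ‖x k - T w‖ + ‖T w - w‖ := by
          have := dist_triangle (x k) (T w) w
          simpa [dist_eq_norm] using this
        have hhalf : ‖x k - w‖ / R ≤ ‖x k - T w‖ / ε := by
          rw [div_le_div_iff₀ hR hε]
          have : ε < ‖x k - w‖ / 2 := by
            rw [hRdef] at hcase; linarith
          rw [hRdef]
          nlinarith [hw, htri]
        exact hηmono (Set.mem_Ici.2 (by positivity)) (Set.mem_Ici.2 (by positivity)) hhalf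
    -- the chain of inequalities
    have hemp : (∫⁻ w, G w ∂(empiricalMeasure d n x))
        = (n : ℝ≥0∞)⁻¹ * ∑ j, G (x j) := by
      rw [empiricalMeasure, lintegral_smul_measure, lintegral_finset_sum_measure]
      simp [lintegral_dirac]
    set S' : ℝ := ∑ j, η (‖x k - x j‖ / ε) with hS'def
    have hS'sum : ENNReal.ofReal S' = ∑ j, G (x j) := by
      rw [hS'def, ENNReal.ofReal_sum_of_nonneg fun j _ => hηnn k j]
    have hnE0 : (n : ℝ≥0∞) ≠ 0 := by exact_mod_cast Nat.pos_of_ne_zero (by omega) |>.ne'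
    have hS'eq : ENNReal.ofReal S' = (n : ℝ≥0∞) * ∫⁻ w, G w ∂(empiricalMeasure d n x) := by
      rw [hemp, ← mul_assoc, ENNReal.mul_inv_cancel hnE0 (ENNReal.natCast_ne_top n), one_mul,
        hS'sum]
    have hchain : ENNReal.ofReal S'
        ≤ (n : ℝ≥0∞) * (ENNReal.ofReal ρmax * ENNReal.ofReal (R ^ d * γ)) := by
      rw [hS'eq, ← hmap]
      refine mul_le_mul_right ?_ _
      calc (∫⁻ w, G w ∂(μ.map T)) ≤ ∫⁻ w, G (T w) ∂μ := lintegral_map_le G T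
        _ ≤ ∫⁻ w, ENNReal.ofReal (h w) ∂μ := lintegral_mono_ae hptwise
        _ ≤ ∫⁻ w, ENNReal.ofReal (h w) ∂((ENNReal.ofReal ρmax) • volume.restrict Ω) :=
            lintegral_mono' hle le_rfl
        _ = ENNReal.ofReal ρmax * ∫⁻ w, ENNReal.ofReal (h w) ∂(volume.restrict Ω) :=
            lintegral_smul_measure _ _
        _ ≤ ENNReal.ofReal ρmax * ∫⁻ w, ENNReal.ofReal (h w) := by
            exact mul_le_mul_right (lintegral_mono' Measure.restrict_le_self le_rfl) _
        _ = ENNReal.ofReal ρmax * ENNReal.ofReal (R ^ d * γ) := by rw [hH]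
    have hS'_le : S' ≤ (n : ℝ) * (ρmax * (R ^ d * γ)) := by
      have hrhs : ENNReal.ofReal ((n : ℝ) * (ρmax * (R ^ d * γ)))
          = (n : ℝ≥0∞) * (ENNReal.ofReal ρmax * ENNReal.ofReal (R ^ d * γ)) := by
        rw [ENNReal.ofReal_mul (by positivity), ENNReal.ofReal_mul hρmax0,
          ENNReal.ofReal_natCast]
      have := hchain
      rw [← hrhs] at this
      exact (ENNReal.ofReal_le_ofReal_iff (by positivity)).1 this
    have hSS' : S ≤ S' := by
      refine Finset.sum_le_sum_of_subset_of_nonneg (Finset.erase_subset _ _) ?_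
      intro j _ _
      exact hηnn k j
    rw [hpart1]
    have hεp : (0 : ℝ) < ε ^ p := Real.rpow_pos_of_pos hε _
    have hεd : (0 : ℝ) < ε ^ d := by positivity
    have hsplit : ε ^ (p + (d : ℝ)) = ε ^ p * ε ^ d := by
      rw [Real.rpow_add hε, Real.rpow_natCast]
    calc (2 / (ε ^ (p + (d : ℝ)) * (n : ℝ) ^ 2)) * S
        ≤ (2 / (ε ^ (p + (d : ℝ)) * (n : ℝ) ^ 2)) * ((n : ℝ) * (ρmax * (R ^ d * γ))) := by
          exact mul_le_mul_of_nonneg_left (hSS'.trans hS'_le) (by positivity)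
      _ = 2 ^ (d + 1) * ρmax * γ / (ε ^ p * n) := by
          rw [hsplit, hRdef, mul_pow, pow_succ]
          field_simp
          ring
end

section
/- Let d ≥ 1 and p > d. Let Ω ⊆ ℝ^d be open, x₁ ∈ Ω, y₁ ∈ ℝ, and δ > 0 with the closed ball B̄(x₁, 4δ) contained in Ω. Let θ : ℝ^d → [0,1] be continuously differentiable with θ = 1 on B̄(0,1), θ = 0 outside the open ball B(0,2), and ‖∇θ(z)‖ ≤ 2 for all z; set θ_δ(z) = θ(z/δ). Let ρ : Ω → ℝ be measurable with 0 ≤ ρ ≤ ρ_max, and let f : Ω → ℝ be differentiable on Ω with f(x₁) = y₁ and ∫_Ω ‖∇f‖^p dx < ∞. Assume the Morrey-type bound: there is K ≥ 0 such that |f(x) − f(x₁)|^p ≤ K · δ^{p−d} · ∫_{B̄(x₁,4δ)} ‖∇f(z)‖^p dz for all x ∈ B̄(x₁, 2δ). Define g : Ω → ℝ by g(x) = (1 − θ_δ(x − x₁)) f(x) + θ_δ(x − x₁) y₁. Then g = y₁ on B̄(x₁, δ), g = f on Ω ∖ B(x₁, 2δ), and there is a constant C depending only on p, d and K such that | ∫_Ω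 ‖∇g(x)‖^p ρ(x)² dx − ∫_Ω ‖∇f(x)‖^p ρ(x)² dx | ≤ C · ρ_max² · ∫_{B̄(x₁,4δ)} ‖∇f(z)‖^p dz. -/
open MeasureTheory Metric Set

private lemma rpow_add_le_aux {a b p : ℝ} (ha : 0 ≤ a) (hb : 0 ≤ b) (hp : 0 ≤ p) :
    (a + b) ^ p ≤ 2 ^ p * (a ^ p + b ^ p) := by
  have h2 : (0:ℝ) < 2 ^ p := Real.rpow_pos_of_pos (by norm_num) p
  rcases le_total a b with h | h
  · calc (a + b) ^ p ≤ (2 * b) ^ p :=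
        Real.rpow_le_rpow (by linarith) (by linarith) hp
      _ = 2 ^ p * b ^ p := Real.mul_rpow (by norm_num) hb
      _ ≤ 2 ^ p * (a ^ p + b ^ p) := by
        have := Real.rpow_nonneg ha p
        nlinarith
  · calc (a + b) ^ p ≤ (2 * a) ^ p :=
        Real.rpow_le_rpow (by linarith) (by linarith) hp
      _ = 2 ^ p * a ^ p := Real.mul_rpow (by norm_num) ha
      _ ≤ 2 ^ p * (a ^ p + b ^ p) := by
        have := Real.rpow_nonneg hb p
        nlinarith

set_option maxHeartbeats 1000000 in
theorem stmt13 (d : ℕ) (hd : 1 ≤ d) (p : ℝ) (hpd : (d : ℝ) < p)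
    (K : ℝ) (hK : 0 ≤ K) :
    ∃ C : ℝ, 0 < C ∧
      ∀ (Ω : Set (EuclideanSpace ℝ (Fin d))), IsOpen Ω →
      ∀ (x₁ : EuclideanSpace ℝ (Fin d)), x₁ ∈ Ω →
      ∀ (y₁ : ℝ) (δ : ℝ), 0 < δ → closedBall x₁ (4 * δ) ⊆ Ω →
      ∀ (θ : EuclideanSpace ℝ (Fin d) → ℝ), ContDiff ℝ 1 θ →
        (∀ z, 0 ≤ θ z ∧ θ z ≤ 1) →
        (∀ z ∈ closedBall (0 : EuclideanSpace ℝ (Fin d)) 1, θ z = 1) →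
        (∀ z ∉ ball (0 : EuclideanSpace ℝ (Fin d)) 2, θ z = 0) →
        (∀ z, ‖fderiv ℝ θ z‖ ≤ 2) →
      ∀ (ρ : EuclideanSpace ℝ (Fin d) → ℝ) (ρmax : ℝ), Measurable ρ →
        (∀ z, 0 ≤ ρ z ∧ ρ z ≤ ρmax) →
      ∀ (f : EuclideanSpace ℝ (Fin d) → ℝ), (∀ z ∈ Ω, DifferentiableAt ℝ f z) →
        f x₁ = y₁ →
        IntegrableOn (fun z => ‖fderiv ℝ f z‖ ^ p) Ω →
        (∀ z ∈ closedBall x₁ (2 * δ),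
          |f z - f x₁| ^ p ≤
            K * δ ^ (p - (d : ℝ)) *
              ∫ w in closedBall x₁ (4 * δ), ‖fderiv ℝ f w‖ ^ p) →
      ∀ (g : EuclideanSpace ℝ (Fin d) → ℝ),
        g = (fun z => (1 - θ (δ⁻¹ • (z - x₁))) * f z + θ (δ⁻¹ • (z - x₁)) * y₁) →
        (∀ z ∈ closedBall x₁ δ, g z = y₁) ∧
        (∀ z ∈ Ω \ ball x₁ (2 * δ), g z = f z) ∧
        |(∫ z in Ω, ‖fderiv ℝ g z‖ ^ p * ρ z ^ 2) -
            ∫ z in Ω, ‖fderiv ℝ f z‖ ^ p * ρ z ^ 2| ≤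
          C * ρmax ^ 2 * ∫ w in closedBall x₁ (4 * δ), ‖fderiv ℝ f w‖ ^ p := by
  classical
  set cd : ℝ := (volume (ball (0 : EuclideanSpace ℝ (Fin d)) 1)).toReal with hcddef
  have hcd0 : 0 ≤ cd := ENNReal.toReal_nonneg
  have hp1 : (1:ℝ) ≤ p := le_trans (by exact_mod_cast hd) hpd.le
  have hp0 : (0:ℝ) ≤ p := by linarith
  have h2p : (0:ℝ) < 2 ^ p := Real.rpow_pos_of_pos (by norm_num) p
  refine ⟨2 ^ p + 2 ^ p * 2 ^ p * 2 ^ d * K * cd + 1, by positivity, ?_⟩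
  intro Ω hΩ x₁ hx₁ y₁ δ hδ hB4Ω θ hθC1 hθ01 hθone hθzero hθd ρ ρmax hρm hρb
    f hfdiff hfx₁ hfint hMorrey g hg
  have hρmax0 : 0 ≤ ρmax := le_trans (hρb x₁).1 (hρb x₁).2
  -- derivative of the inner affine map
  set A : EuclideanSpace ℝ (Fin d) →L[ℝ] EuclideanSpace ℝ (Fin d) :=
    δ⁻¹ • ContinuousLinearMap.id ℝ (EuclideanSpace ℝ (Fin d)) with hAdef
  have hu : ∀ z : EuclideanSpace ℝ (Fin d),
      HasFDerivAt (fun w => δ⁻¹ • (w - x₁)) A z := fun z =>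
    ((hasFDerivAt_id z).sub_const x₁).const_smul δ⁻¹
  have hAnorm : ‖A‖ ≤ δ⁻¹ := by
    rw [hAdef]
    calc ‖δ⁻¹ • ContinuousLinearMap.id ℝ (EuclideanSpace ℝ (Fin d))‖
        ≤ ‖δ⁻¹‖ * ‖ContinuousLinearMap.id ℝ (EuclideanSpace ℝ (Fin d))‖ :=
          ContinuousLinearMap.opNorm_smul_le _ _
      _ ≤ δ⁻¹ * 1 := by
          rw [Real.norm_eq_abs, abs_of_pos (inv_pos.2 hδ)]
          exact mul_le_mul_of_nonneg_left ContinuousLinearMap.norm_id_le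
            (inv_pos.2 hδ).le
      _ = δ⁻¹ := mul_one _
  set Dh : EuclideanSpace ℝ (Fin d) → EuclideanSpace ℝ (Fin d) →L[ℝ] ℝ :=
    fun z => (fderiv ℝ θ (δ⁻¹ • (z - x₁))).comp A with hDhdef
  have hh : ∀ z, HasFDerivAt (fun w => θ (δ⁻¹ • (w - x₁))) (Dh z) z := fun z =>
    (((hθC1.differentiable one_ne_zero) (δ⁻¹ • (z - x₁))).hasFDerivAt).comp z (hu z)
  have hDhnorm : ∀ z, ‖Dh z‖ ≤ 2 / δ := by
    intro z
    calc ‖Dh z‖ ≤ ‖fderiv ℝ θ (δ⁻¹ • (z - x₁))‖ * ‖A‖ :=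
        ContinuousLinearMap.opNorm_comp_le _ _
      _ ≤ 2 * δ⁻¹ := mul_le_mul (hθd _) hAnorm (norm_nonneg _) (by norm_num)
      _ = 2 / δ := by rw [div_eq_mul_inv]
  -- conclusion 1
  have hgone : ∀ z ∈ closedBall x₁ δ, g z = y₁ := by
    intro z hz
    have hmem : δ⁻¹ • (z - x₁) ∈ closedBall (0 : EuclideanSpace ℝ (Fin d)) 1 := by
      rw [mem_closedBall_zero_iff, norm_smul, Real.norm_eq_abs,
        abs_of_pos (inv_pos.2 hδ)]
      have h1 : ‖z - x₁‖ ≤ δ := by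
        rw [← dist_eq_norm]; exact mem_closedBall.1 hz
      calc δ⁻¹ * ‖z - x₁‖ ≤ δ⁻¹ * δ :=
          mul_le_mul_of_nonneg_left h1 (inv_pos.2 hδ).le
        _ = 1 := inv_mul_cancel₀ hδ.ne'
    rw [hg]
    simp [hθone _ hmem]
  -- θ vanishes (with derivative) far away
  have hfar : ∀ z : EuclideanSpace ℝ (Fin d), 2 * δ ≤ dist z x₁ →
      θ (δ⁻¹ • (z - x₁)) = 0 ∧ Dh z = 0 := by
    intro z hz
    have hmem : δ⁻¹ • (z - x₁) ∉ ball (0 : EuclideanSpace ℝ (Fin d)) 2 := by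
      rw [mem_ball_zero_iff, norm_smul, Real.norm_eq_abs,
        abs_of_pos (inv_pos.2 hδ), not_lt]
      rw [dist_eq_norm] at hz
      calc (2:ℝ) = δ⁻¹ * (2 * δ) := by field_simp
        _ ≤ δ⁻¹ * ‖z - x₁‖ := mul_le_mul_of_nonneg_left hz (inv_pos.2 hδ).le
    have hmin : IsLocalMin θ (δ⁻¹ • (z - x₁)) := by
      apply Filter.Eventually.of_forall
      intro x
      rw [hθzero _ hmem]
      exact (hθ01 x).1
    refine ⟨hθzero _ hmem, ?_⟩
    rw [hDhdef]
    simp only [hmin.fderiv_eq_zero, ContinuousLinearMap.zero_comp]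
  -- conclusion 2
  have hgeqf : ∀ z ∈ Ω \ ball x₁ (2 * δ), g z = f z := by
    intro z hz
    have h2 : 2 * δ ≤ dist z x₁ := not_lt.1 (fun h => hz.2 (mem_ball.2 h))
    rw [hg]
    simp [(hfar z h2).1]
  -- derivative of g on Ω
  have hg' : ∀ z ∈ Ω, HasFDerivAt g
      ((1 - θ (δ⁻¹ • (z - x₁))) • fderiv ℝ f z + (y₁ - f z) • Dh z) z := by
    intro z hz
    have hf' := (hfdiff z hz).hasFDerivAt
    have h1 : HasFDerivAt (fun w => (1 - θ (δ⁻¹ • (w - x₁))) * f w)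
        ((1 - θ (δ⁻¹ • (z - x₁))) • fderiv ℝ f z + f z • (-(Dh z))) z :=
      ((hh z).const_sub 1).mul hf'
    have h2 : HasFDerivAt (fun w => θ (δ⁻¹ • (w - x₁)) * y₁) (y₁ • Dh z) z :=
      (hh z).mul_const y₁
    have h3 := h1.add h2
    rw [hg]
    refine h3.congr_fderiv ?_
    module
  -- fderiv g = fderiv f far away (on Ω)
  have hDgeqDf : ∀ z ∈ Ω, 2 * δ ≤ dist z x₁ → fderiv ℝ g z = fderiv ℝ f z := by
    intro z hz h2
    rw [(hg' z hz).fderiv, (hfar z h2).1, (hfar z h2).2,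
      smul_zero, add_zero, sub_zero, one_smul]
  -- norm bound for fderiv g on Ω
  have hDgnorm : ∀ z ∈ Ω,
      ‖fderiv ℝ g z‖ ≤ ‖fderiv ℝ f z‖ + (2 / δ) * |f z - f x₁| := by
    intro z hz
    rw [(hg' z hz).fderiv]
    have hb1 : |1 - θ (δ⁻¹ • (z - x₁))| ≤ 1 :=
      abs_le.2 ⟨by linarith [(hθ01 (δ⁻¹ • (z - x₁))).2],
        by linarith [(hθ01 (δ⁻¹ • (z - x₁))).1]⟩
    have hy : |y₁ - f z| = |f z - f x₁| := by rw [← hfx₁, abs_sub_comm]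
    calc ‖(1 - θ (δ⁻¹ • (z - x₁))) • fderiv ℝ f z + (y₁ - f z) • Dh z‖
        ≤ ‖(1 - θ (δ⁻¹ • (z - x₁))) • fderiv ℝ f z‖ + ‖(y₁ - f z) • Dh z‖ :=
          norm_add_le _ _
      _ ≤ ‖(1 - θ (δ⁻¹ • (z - x₁)))‖ * ‖fderiv ℝ f z‖ + ‖y₁ - f z‖ * ‖Dh z‖ :=
          add_le_add (ContinuousLinearMap.opNorm_smul_le _ _)
            (ContinuousLinearMap.opNorm_smul_le _ _)
      _ ≤ 1 * ‖fderiv ℝ f z‖ + |f z - f x₁| * (2 / δ) := by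
          rw [Real.norm_eq_abs, Real.norm_eq_abs, hy]
          have h0 : (0:ℝ) ≤ |f z - f x₁| := abs_nonneg _
          have := hDhnorm z
          have hn : (0:ℝ) ≤ ‖fderiv ℝ f z‖ := norm_nonneg _
          have hn2 : (0:ℝ) ≤ ‖Dh z‖ := norm_nonneg _
          nlinarith
      _ = ‖fderiv ℝ f z‖ + (2 / δ) * |f z - f x₁| := by ring
  refine ⟨hgone, hgeqf, ?_⟩
  set B2 : Set (EuclideanSpace ℝ (Fin d)) := closedBall x₁ (2 * δ) with hB2def
  set B4 : Set (EuclideanSpace ℝ (Fin d)) := closedBall x₁ (4 * δ) with hB4def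
  set E4 : ℝ := ∫ w in B4, ‖fderiv ℝ f w‖ ^ p with hE4def
  have hB2B4 : B2 ⊆ B4 := closedBall_subset_closedBall (by linarith)
  have hB2Ω : B2 ⊆ Ω := hB2B4.trans hB4Ω
  have hmeasB2 : MeasurableSet B2 := measurableSet_closedBall
  have hmeasΩ : MeasurableSet Ω := hΩ.measurableSet
  have hmeasI : MeasurableSet (Ω ∩ B2) := hmeasΩ.inter hmeasB2
  have hmeasD : MeasurableSet (Ω \ B2) := hmeasΩ.diff hmeasB2
  have hfpnonneg : ∀ z : EuclideanSpace ℝ (Fin d), 0 ≤ ‖fderiv ℝ f z‖ ^ p :=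
    fun z => Real.rpow_nonneg (norm_nonneg _) p
  have hE40 : 0 ≤ E4 :=
    setIntegral_nonneg measurableSet_closedBall fun x _ => hfpnonneg x
  have hfint4 : IntegrableOn (fun z => ‖fderiv ℝ f z‖ ^ p) B4 := hfint.mono_set hB4Ω
  have hfintI : IntegrableOn (fun z => ‖fderiv ℝ f z‖ ^ p) (Ω ∩ B2) :=
    hfint.mono_set inter_subset_left
  have hrpowc : Measurable fun t : ℝ => t ^ p :=
    (Real.continuous_rpow_const hp0).measurable
  have hfmeas : Measurable fun z => ‖fderiv ℝ f z‖ ^ p :=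
    hrpowc.comp (measurable_fderiv ℝ f).norm
  have hgmeas : Measurable fun z => ‖fderiv ℝ g z‖ ^ p :=
    hrpowc.comp (measurable_fderiv ℝ g).norm
  have hρ2 : ∀ z, ρ z ^ 2 ≤ ρmax ^ 2 := fun z =>
    pow_le_pow_left₀ (hρb z).1 (hρb z).2 2
  have hρ2nonneg : ∀ z : EuclideanSpace ℝ (Fin d), 0 ≤ ρ z ^ 2 := fun z => sq_nonneg _
  set F : EuclideanSpace ℝ (Fin d) → ℝ := fun z => ‖fderiv ℝ f z‖ ^ p * ρ z ^ 2 with hFdef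
  set G : EuclideanSpace ℝ (Fin d) → ℝ := fun z => ‖fderiv ℝ g z‖ ^ p * ρ z ^ 2 with hGdef
  have hFmeas : Measurable F := hfmeas.mul (hρm.pow_const 2)
  have hGmeas : Measurable G := hgmeas.mul (hρm.pow_const 2)
  have hFnonneg : ∀ z, 0 ≤ F z := fun z => mul_nonneg (hfpnonneg z) (hρ2nonneg z)
  have hGnonneg : ∀ z, 0 ≤ G z := fun z =>
    mul_nonneg (Real.rpow_nonneg (norm_nonneg _) p) (hρ2nonneg z)
  have hFle : ∀ z, F z ≤ ρmax ^ 2 * ‖fderiv ℝ f z‖ ^ p := by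
    intro z
    calc F z ≤ ‖fderiv ℝ f z‖ ^ p * ρmax ^ 2 :=
        mul_le_mul_of_nonneg_left (hρ2 z) (hfpnonneg z)
      _ = ρmax ^ 2 * ‖fderiv ℝ f z‖ ^ p := mul_comm _ _
  have hFint : IntegrableOn F Ω := by
    refine (hfint.const_mul (ρmax ^ 2)).mono' hFmeas.aestronglyMeasurable ?_
    refine Filter.Eventually.of_forall fun z => ?_
    rw [Real.norm_eq_abs, abs_of_nonneg (hFnonneg z)]
    exact hFle z
  set M : ℝ := K * δ ^ (p - (d : ℝ)) * E4 with hMdef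
  have hM0 : 0 ≤ M :=
    mul_nonneg (mul_nonneg hK (Real.rpow_nonneg hδ.le _)) hE40
  set c₁ : ℝ := ρmax ^ 2 * 2 ^ p with hc₁def
  set c₂ : ℝ := ρmax ^ 2 * (2 ^ p * ((2 / δ) ^ p * M)) with hc₂def
  have hc₁0 : 0 ≤ c₁ := by positivity
  have hc₂0 : 0 ≤ c₂ := by positivity
  have hGle : ∀ z ∈ Ω ∩ B2, G z ≤ c₁ * ‖fderiv ℝ f z‖ ^ p + c₂ := by
    intro z hz
    have hgb := hDgnorm z hz.1
    have h1 : ‖fderiv ℝ g z‖ ^ p ≤ (‖fderiv ℝ f z‖ + (2 / δ) * |f z - f x₁|) ^ p :=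
      Real.rpow_le_rpow (norm_nonneg _) hgb hp0
    have h2 : (‖fderiv ℝ f z‖ + (2 / δ) * |f z - f x₁|) ^ p
        ≤ 2 ^ p * (‖fderiv ℝ f z‖ ^ p + ((2 / δ) * |f z - f x₁|) ^ p) :=
      rpow_add_le_aux (norm_nonneg _) (mul_nonneg (by positivity) (abs_nonneg _)) hp0
    have h3 : ((2 / δ) * |f z - f x₁|) ^ p = (2 / δ) ^ p * |f z - f x₁| ^ p :=
      Real.mul_rpow (by positivity) (abs_nonneg _)
    have h4 : |f z - f x₁| ^ p ≤ M := hMorrey z hz.2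
    have h2δp : (0:ℝ) ≤ (2 / δ) ^ p := Real.rpow_nonneg (by positivity) p
    have h5 : ‖fderiv ℝ g z‖ ^ p
        ≤ 2 ^ p * ‖fderiv ℝ f z‖ ^ p + 2 ^ p * ((2 / δ) ^ p * M) := by
      calc ‖fderiv ℝ g z‖ ^ p
          ≤ 2 ^ p * (‖fderiv ℝ f z‖ ^ p + (2 / δ * |f z - f x₁|) ^ p) := h1.trans h2
        _ = 2 ^ p * ‖fderiv ℝ f z‖ ^ p + 2 ^ p * ((2 / δ) ^ p * |f z - f x₁| ^ p) := by
            rw [h3]; ring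
        _ ≤ 2 ^ p * ‖fderiv ℝ f z‖ ^ p + 2 ^ p * ((2 / δ) ^ p * M) := by gcongr
    have hG1 : G z ≤ ρmax ^ 2 * ‖fderiv ℝ g z‖ ^ p :=
      le_trans (mul_le_mul_of_nonneg_left (hρ2 z)
        (Real.rpow_nonneg (norm_nonneg (fderiv ℝ g z)) p)) (le_of_eq (mul_comm _ _))
    calc G z ≤ ρmax ^ 2 * ‖fderiv ℝ g z‖ ^ p := hG1
      _ ≤ ρmax ^ 2 * (2 ^ p * ‖fderiv ℝ f z‖ ^ p + 2 ^ p * ((2 / δ) ^ p * M)) :=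
          mul_le_mul_of_nonneg_left h5 (by positivity)
      _ = c₁ * ‖fderiv ℝ f z‖ ^ p + c₂ := by rw [hc₁def, hc₂def]; ring
  have hIfin : volume (Ω ∩ B2) < ⊤ :=
    lt_of_le_of_lt (measure_mono inter_subset_right) measure_closedBall_lt_top
  have hbint : IntegrableOn (fun z => c₁ * ‖fderiv ℝ f z‖ ^ p + c₂) (Ω ∩ B2) :=
    (hfintI.const_mul c₁).add (integrableOn_const hIfin.ne)
  have hGintI : IntegrableOn G (Ω ∩ B2) := by
    refine hbint.mono' hGmeas.aestronglyMeasurable ?_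
    refine (ae_restrict_iff' hmeasI).2 (Filter.Eventually.of_forall fun z hz => ?_)
    rw [Real.norm_eq_abs, abs_of_nonneg (hGnonneg z)]
    exact hGle z hz
  have hGFeq : EqOn G F (Ω \ B2) := by
    intro z hz
    have h2 : 2 * δ ≤ dist z x₁ :=
      le_of_lt (not_le.1 fun h => hz.2 (mem_closedBall.mpr h))
    show ‖fderiv ℝ g z‖ ^ p * ρ z ^ 2 = ‖fderiv ℝ f z‖ ^ p * ρ z ^ 2
    rw [hDgeqDf z hz.1 h2]
  have hFintD : IntegrableOn F (Ω \ B2) := hFint.mono_set diff_subset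
  have hGintD : IntegrableOn G (Ω \ B2) :=
    hFintD.congr_fun (fun z hz => (hGFeq hz).symm) hmeasD
  have hGint : IntegrableOn G Ω := by
    have h := hGintI.union hGintD
    rwa [inter_union_diff] at h
  have hsplitG := integral_inter_add_diff (μ := volume) (s := Ω) (t := B2) hmeasB2 hGint
  have hsplitF := integral_inter_add_diff (μ := volume) (s := Ω) (t := B2) hmeasB2 hFint
  have hDeq : (∫ z in Ω \ B2, G z) = ∫ z in Ω \ B2, F z :=
    setIntegral_congr_fun hmeasD hGFeq
  have hdiff : (∫ z in Ω, G z) - ∫ z in Ω, F z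
      = (∫ z in Ω ∩ B2, G z) - ∫ z in Ω ∩ B2, F z := by
    linarith [hsplitG, hsplitF, hDeq]
  have hfI4 : (∫ z in Ω ∩ B2, ‖fderiv ℝ f z‖ ^ p) ≤ E4 := by
    refine setIntegral_mono_set hfint4 ?_ ?_
    · exact Filter.Eventually.of_forall fun z => hfpnonneg z
    · exact (inter_subset_right.trans hB2B4).eventuallyLE
  have hFI : (∫ z in Ω ∩ B2, F z) ≤ ρmax ^ 2 * E4 := by
    calc (∫ z in Ω ∩ B2, F z)
        ≤ ∫ z in Ω ∩ B2, ρmax ^ 2 * ‖fderiv ℝ f z‖ ^ p :=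
          setIntegral_mono_on (hFint.mono_set inter_subset_left)
            (hfintI.const_mul _) hmeasI (fun z _ => hFle z)
      _ = ρmax ^ 2 * ∫ z in Ω ∩ B2, ‖fderiv ℝ f z‖ ^ p := integral_const_mul _ _
      _ ≤ ρmax ^ 2 * E4 := mul_le_mul_of_nonneg_left hfI4 (by positivity)
  have hvolB2 : (volume B2).toReal = (2 * δ) ^ d * cd := by
    rw [hB2def, Measure.addHaar_closedBall _ x₁ (by positivity),
      finrank_euclideanSpace_fin, ENNReal.toReal_mul,
      ENNReal.toReal_ofReal (by positivity), hcddef]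
  have hvol : (volume (Ω ∩ B2)).toReal ≤ (2 * δ) ^ d * cd := by
    rw [← hvolB2]
    exact ENNReal.toReal_mono measure_closedBall_lt_top.ne
      (measure_mono inter_subset_right)
  have hGI : (∫ z in Ω ∩ B2, G z) ≤ c₁ * E4 + c₂ * ((2 * δ) ^ d * cd) := by
    calc (∫ z in Ω ∩ B2, G z)
        ≤ ∫ z in Ω ∩ B2, (c₁ * ‖fderiv ℝ f z‖ ^ p + c₂) :=
          setIntegral_mono_on hGintI hbint hmeasI hGle
      _ = c₁ * (∫ z in Ω ∩ B2, ‖fderiv ℝ f z‖ ^ p)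
            + (volume (Ω ∩ B2)).toReal * c₂ := by
          rw [integral_add (hfintI.const_mul c₁) (integrableOn_const hIfin.ne),
            integral_const_mul, setIntegral_const, smul_eq_mul]
          rfl
      _ ≤ c₁ * E4 + ((2 * δ) ^ d * cd) * c₂ := by
          gcongr
      _ = c₁ * E4 + c₂ * ((2 * δ) ^ d * cd) := by ring
  have hδ1 : δ ^ (p - (d : ℝ)) * (2 * δ) ^ d = 2 ^ d * δ ^ p := by
    have h : δ ^ (p - (d : ℝ)) * δ ^ (d : ℕ) = δ ^ p := by
      rw [← Real.rpow_natCast δ d, ← Real.rpow_add hδ, sub_add_cancel]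
    rw [mul_pow, ← h]; ring
  have key : (2 / δ) ^ p * (δ ^ (p - (d : ℝ)) * (2 * δ) ^ d) = 2 ^ p * 2 ^ d := by
    rw [hδ1, div_eq_mul_inv, Real.mul_rpow (by norm_num) (inv_nonneg.2 hδ.le),
      Real.inv_rpow hδ.le]
    have hδp : (0:ℝ) < δ ^ p := Real.rpow_pos_of_pos hδ p
    field_simp
  have hc2 : c₂ * ((2 * δ) ^ d * cd) = ρmax ^ 2 * (2 ^ p * 2 ^ p * 2 ^ d * K * cd) * E4 := by
    rw [hc₂def, hMdef]
    linear_combination (ρmax ^ 2 * 2 ^ p * K * E4 * cd) * key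
  have hIG0 : 0 ≤ ∫ z in Ω ∩ B2, G z := setIntegral_nonneg hmeasI fun z _ => hGnonneg z
  have hIF0 : 0 ≤ ∫ z in Ω ∩ B2, F z := setIntegral_nonneg hmeasI fun z _ => hFnonneg z
  calc |(∫ z in Ω, G z) - ∫ z in Ω, F z|
      ≤ (∫ z in Ω ∩ B2, G z) + ∫ z in Ω ∩ B2, F z := by
        rw [hdiff, abs_le]
        constructor <;> linarith
    _ ≤ (c₁ * E4 + c₂ * ((2 * δ) ^ d * cd)) + ρmax ^ 2 * E4 := add_le_add hGI hFI
    _ = (2 ^ p + 2 ^ p * 2 ^ p * 2 ^ d * K * cd + 1) * ρmax ^ 2 * E4 := by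
        rw [hc2, hc₁def]; ring
end
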